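/- arXiv:2011.04046 — 5 statements merged into one kernel-verified Lean document; each statement's English description precedes it below -/
import Mathlib

section
/- Let k be a field with char(k) ≠ 2 and let f : 𝔸ⁿ → 𝔸ⁿ be a polynomial map vanishing at 0 with an isolated zero at 0 such that dim_k Q₀(f) ≥ 2. Then for every k-linear map φ : Q₀(f) → k with φ(E) = 1, the associated quadratic form p ↦ φ(p·p) on Q₀(f) is isotropic, i.e., there exists a nonzero element p ∈ Q₀(f) with φ(p·p) = 0. (Since β_φ is nondegenerate, this is equivalent to saying that the hyperbolic plane ℍ is an orthogonal direct summand of the EKL form w₀(f).) -/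
open MvPolynomial Module

namespace EKL

variable (k : Type) [Field k]

/-- The submonoid of polynomials with nonzero constant term (the complement of
the maximal ideal at the origin). -/
def S (n : ℕ) : Submonoid (MvPolynomial (Fin n) k) where
  carrier := {p | constantCoeff p ≠ 0}
  mul_mem' := by
    intro a b ha hb
    simp only [Set.mem_setOf_eq, map_mul] at *
    exact mul_ne_zero ha hb
  one_mem' := by simp

/-- The local ring P₀ of affine n-space at the origin. -/
abbrev Loc (n : ℕ) := Localization (S k n)

/-- The maximal ideal 𝔪 = (x₁,…,xₙ) of the polynomial ring. -/
noncomputable def mIdeal (n : ℕ) : Ideal (MvPolynomial (Fin n) k) :=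
  Ideal.span (Set.range MvPolynomial.X)

/-- The ideal (f₁,…,fₙ)P₀. -/
noncomputable def idealOf {n : ℕ} (f : Fin n → MvPolynomial (Fin n) k) : Ideal (Loc k n) :=
  Ideal.span (Set.range fun i => algebraMap (MvPolynomial (Fin n) k) (Loc k n) (f i))

/-- The local algebra Q₀(f) of f at the origin. -/
abbrev Q0 {n : ℕ} (f : Fin n → MvPolynomial (Fin n) k) := Loc k n ⧸ idealOf k f

/-- The canonical ring homomorphism P → Q₀(f). -/
noncomputable def toQ0 {n : ℕ} (f : Fin n → MvPolynomial (Fin n) k) :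
    MvPolynomial (Fin n) k →+* Q0 k f :=
  (Ideal.Quotient.mk (idealOf k f)).comp (algebraMap _ _)

/-- `a` is a matrix of polynomials with fᵢ = Σⱼ aᵢⱼ xⱼ; the distinguished socle
element E(f) is then the image in Q₀(f) of det a. -/
def IsSocleMatrix {n : ℕ} (f : Fin n → MvPolynomial (Fin n) k)
    (a : Matrix (Fin n) (Fin n) (MvPolynomial (Fin n) k)) : Prop :=
  ∀ i, f i = ∑ j, a i j * MvPolynomial.X j

/-- The bilinear form β_φ(p,q) = φ(p·q). -/
def beta {V : Type} [CommRing V] [Algebra k V] (φ : V →ₗ[k] k) :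
    V →ₗ[k] V →ₗ[k] k :=
  LinearMap.mk₂ k (fun p q => φ (p * q))
    (fun m₁ m₂ q => by simp [add_mul])
    (fun c m q => by simp [smul_mul_assoc])
    (fun m q₁ q₂ => by simp [mul_add])
    (fun c m q => by simp [mul_smul_comm])

/-- Isometry of bilinear forms (with explicit carrier types). -/
def Isometric (V W : Type) [AddCommGroup V] [Module k V] [AddCommGroup W] [Module k W]
    (B₁ : V →ₗ[k] V →ₗ[k] k) (B₂ : W →ₗ[k] W →ₗ[k] k) : Prop :=
  ∃ e : V ≃ₗ[k] W, ∀ v w, B₂ (e v) (e w) = B₁ v w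

/-- The diagonal bilinear form ⟨c₁,…,c_m⟩ on kᵐ. -/
def diagForm (m : ℕ) (c : Fin m → k) : (Fin m → k) →ₗ[k] (Fin m → k) →ₗ[k] k :=
  LinearMap.mk₂ k (fun v w => ∑ i, c i * v i * w i)
    (fun v v' w => by
      simp only [Pi.add_apply]
      rw [← Finset.sum_add_distrib]
      exact Finset.sum_congr rfl fun i _ => by ring)
    (fun a v w => by
      simp only [Pi.smul_apply, smul_eq_mul, Finset.mul_sum]
      exact Finset.sum_congr rfl fun i _ => by ring)
    (fun v w w' => by
      simp only [Pi.add_apply]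
      rw [← Finset.sum_add_distrib]
      exact Finset.sum_congr rfl fun i _ => by ring)
    (fun a v w => by
      simp only [Pi.smul_apply, smul_eq_mul, Finset.mul_sum]
      exact Finset.sum_congr rfl fun i _ => by ring)

/-- Diagonal coefficients of r copies of the hyperbolic plane ℍ = ⟨1,−1⟩. -/
def hypDiag (r : ℕ) : Fin (2 * r) → k := fun i => if i.val % 2 = 0 then 1 else -1



set_option maxHeartbeats 1000000
set_option synthInstance.maxHeartbeats 400000

/-- Cramer identity: det(A)·Xⱼ lies in the ideal generated by the fᵢ. -/
lemma det_mul_X_eq {n : ℕ} (f : Fin n → MvPolynomial (Fin n) k)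
    (A : Matrix (Fin n) (Fin n) (MvPolynomial (Fin n) k)) (hA : IsSocleMatrix k f A)
    (j : Fin n) : A.det * MvPolynomial.X j = ∑ i, A.adjugate j i * f i := by
  have hf : f = A.mulVec (fun j => MvPolynomial.X j) := by
    funext i
    simpa [Matrix.mulVec, dotProduct] using hA i
  have h : A.adjugate.mulVec f = A.det • (fun j => MvPolynomial.X j) := by
    rw [hf, Matrix.mulVec_mulVec, Matrix.adjugate_mul, Matrix.smul_mulVec,
      Matrix.one_mulVec]
  have := congrFun h j
  simpa [Matrix.mulVec, dotProduct, eq_comm, mul_comm] using this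

lemma toQ0_f {n : ℕ} (f : Fin n → MvPolynomial (Fin n) k) (i : Fin n) :
    toQ0 k f (f i) = 0 := by
  rw [toQ0, RingHom.comp_apply, Ideal.Quotient.eq_zero_iff_mem]
  exact Ideal.subset_span ⟨i, rfl⟩

lemma toQ0_det_mul_X {n : ℕ} (f : Fin n → MvPolynomial (Fin n) k)
    (A : Matrix (Fin n) (Fin n) (MvPolynomial (Fin n) k)) (hA : IsSocleMatrix k f A)
    (j : Fin n) : toQ0 k f (A.det * MvPolynomial.X j) = 0 := by
  rw [det_mul_X_eq k f A hA j, map_sum]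
  refine Finset.sum_eq_zero fun i _ => ?_
  rw [map_mul, toQ0_f k f i]
  exact mul_zero (toQ0 k f (A.adjugate j i))

lemma mem_span_X {n : ℕ} (g : MvPolynomial (Fin n) k) (hg : constantCoeff g = 0) :
    g ∈ Ideal.span (Set.range (MvPolynomial.X : Fin n → MvPolynomial (Fin n) k)) := by
  rw [← Set.image_univ, MvPolynomial.mem_ideal_span_X_image]
  intro m hm
  by_contra hcon
  push_neg at hcon
  have hm0 : m = 0 := by
    ext i
    simpa using hcon i (Set.mem_univ i)
  rw [MvPolynomial.mem_support_iff, hm0] at hm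
  exact hm (by simpa [MvPolynomial.constantCoeff_eq] using hg)

lemma toQ0_det_mul_mem {n : ℕ} (f : Fin n → MvPolynomial (Fin n) k)
    (A : Matrix (Fin n) (Fin n) (MvPolynomial (Fin n) k)) (hA : IsSocleMatrix k f A)
    (g : MvPolynomial (Fin n) k)
    (hmem : g ∈ Ideal.span (Set.range (MvPolynomial.X : Fin n → MvPolynomial (Fin n) k))) :
    toQ0 k f (A.det * g) = 0 := by
  induction hmem using Submodule.span_induction with
  | mem x hx =>
      obtain ⟨j, rfl⟩ := hx
      exact toQ0_det_mul_X k f A hA j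
  | zero => rw [mul_zero A.det, map_zero]
  | add x y _ _ hx hy => rw [mul_add, map_add, hx, hy, add_zero]
  | smul c x _ hx =>
      rw [smul_eq_mul, mul_comm c x, ← mul_assoc, map_mul, hx]
      exact zero_mul (toQ0 k f c)

lemma toQ0_mem {n : ℕ} (f : Fin n → MvPolynomial (Fin n) k)
    (hX : ∀ j, toQ0 k f (MvPolynomial.X j) = 0)
    (g : MvPolynomial (Fin n) k)
    (hmem : g ∈ Ideal.span (Set.range (MvPolynomial.X : Fin n → MvPolynomial (Fin n) k))) :
    toQ0 k f g = 0 := by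
  induction hmem using Submodule.span_induction with
  | mem x hx => obtain ⟨j, rfl⟩ := hx; exact hX j
  | zero => rw [map_zero]
  | add x y _ _ hx hy => rw [map_add, hx, hy, add_zero]
  | smul c x _ hx =>
      rw [smul_eq_mul, map_mul, hx]
      exact mul_zero (toQ0 k f c)

lemma toQ0_C {n : ℕ} (f : Fin n → MvPolynomial (Fin n) k) (c : k) :
    toQ0 k f (MvPolynomial.C c) = (algebraMap k (Q0 k f) : k →+* Q0 k f) c := by
  rw [toQ0, RingHom.comp_apply,
    show (MvPolynomial.C c : MvPolynomial (Fin n) k) = algebraMap k _ c from rfl,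
    ← IsScalarTower.algebraMap_apply k (MvPolynomial (Fin n) k) (Loc k n),
    IsScalarTower.algebraMap_apply k (Loc k n) (Q0 k f), Ideal.Quotient.algebraMap_eq]

lemma toQ0_eq_algebraMap {n : ℕ} (f : Fin n → MvPolynomial (Fin n) k)
    (hX : ∀ j, toQ0 k f (MvPolynomial.X j) = 0) (q : MvPolynomial (Fin n) k) :
    toQ0 k f q = (algebraMap k (Q0 k f) : k →+* Q0 k f) (constantCoeff q) := by
  have hz : toQ0 k f (q - MvPolynomial.C (constantCoeff q)) = 0 :=
    toQ0_mem k f hX _ (mem_span_X k _ (by simp))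
  calc toQ0 k f q
      = toQ0 k f (MvPolynomial.C (constantCoeff q)) +
        toQ0 k f (q - MvPolynomial.C (constantCoeff q)) := by
        rw [← map_add]; congr 1; ring
    _ = toQ0 k f (MvPolynomial.C (constantCoeff q)) := by rw [hz, add_zero]
    _ = (algebraMap k (Q0 k f) : k →+* Q0 k f) (constantCoeff q) := toQ0_C k f _

theorem stmt0 (hchar : ringChar k ≠ 2) (n : ℕ) (f : Fin n → MvPolynomial (Fin n) k)
    (hf0 : ∀ i, constantCoeff (f i) = 0)
    (hfd : FiniteDimensional k (Q0 k f))
    (hdim : 2 ≤ Module.finrank k (Q0 k f))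
    (A : Matrix (Fin n) (Fin n) (MvPolynomial (Fin n) k)) (hA : IsSocleMatrix k f A)
    (φ : Q0 k f →ₗ[k] k) (hφ : φ (toQ0 k f A.det) = 1) :
    ∃ p : Q0 k f, p ≠ 0 ∧ φ (p * p) = 0 := by
  by_cases hc : constantCoeff A.det = 0
  · refine ⟨toQ0 k f A.det, ?_, ?_⟩
    · intro h
      rw [h, map_zero] at hφ
      exact one_ne_zero hφ.symm
    · rw [← map_mul, toQ0_det_mul_mem k f A hA A.det (mem_span_X k _ hc), map_zero]
  · exfalso
    have hX : ∀ j, toQ0 k f (MvPolynomial.X j) = 0 := by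
      intro j
      have h1 : toQ0 k f (A.det * MvPolynomial.X j) = 0 := toQ0_det_mul_X k f A hA j
      have h2 : (Ideal.Quotient.mk (idealOf k f) (algebraMap _ (Loc k n) A.det)) *
          toQ0 k f (MvPolynomial.X j) = 0 := by
        rw [← h1, toQ0, RingHom.comp_apply, RingHom.comp_apply, ← map_mul, ← map_mul]
      have h3 : IsUnit (Ideal.Quotient.mk (idealOf k f)
          (algebraMap (MvPolynomial (Fin n) k) (Loc k n) A.det)) :=
        (IsLocalization.map_units (M := S k n) (Loc k n) ⟨A.det, hc⟩).map
          (Ideal.Quotient.mk (idealOf k f))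
      exact (IsUnit.mul_right_eq_zero (M₀ := Q0 k f) h3).mp h2
    have hone : ∀ w : Q0 k f, ∃ c : k, c • (1 : Q0 k f) = w := by
      intro w
      obtain ⟨z, rfl⟩ := Ideal.Quotient.mk_surjective (I := idealOf k f) w
      obtain ⟨⟨p, s⟩, hz⟩ := IsLocalization.mk'_surjective (S k n) z
      have hs : constantCoeff (s : MvPolynomial (Fin n) k) ≠ 0 := s.2
      set cs := constantCoeff (s : MvPolynomial (Fin n) k) with hcs
      set cp := constantCoeff p with hcp
      refine ⟨cp / cs, ?_⟩
      set y := Ideal.Quotient.mk (idealOf k f) z with hy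
      have hspec : y * toQ0 k f (s : MvPolynomial (Fin n) k) = toQ0 k f p := by
        rw [hy, toQ0, RingHom.comp_apply, RingHom.comp_apply, ← map_mul, ← hz,
          IsLocalization.mk'_spec]
      rw [toQ0_eq_algebraMap k f hX, toQ0_eq_algebraMap k f hX, ← hcs, ← hcp] at hspec
      have hu : IsUnit ((algebraMap k (Q0 k f) : k →+* Q0 k f) cs) :=
        (isUnit_iff_ne_zero.mpr hs).map ((algebraMap k (Q0 k f) : k →+* Q0 k f))
      have h4 : (algebraMap k (Q0 k f) : k →+* Q0 k f) (cp / cs) * (algebraMap k (Q0 k f) : k →+* Q0 k f) cs =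
          y * (algebraMap k (Q0 k f) : k →+* Q0 k f) cs := by
        rw [← map_mul, div_mul_cancel₀ cp hs, hspec]
      have h5 : (algebraMap k (Q0 k f) : k →+* Q0 k f) (cp / cs) = y := IsUnit.mul_right_cancel hu h4
      exact (Algebra.algebraMap_eq_smul_one (A := Q0 k f) (cp / cs)).symm.trans h5
    have := finrank_le_one (1 : Q0 k f) hone
    omega

end EKL
end

section
/- Let k be a field with char(k) ≠ 2, let a ∈ k^×, and let f : 𝔸¹ → 𝔸¹ be the map f(x) = axⁿ with n ≥ 2. Then Q₀(f) ≅ k[x]/(xⁿ), and for any k-linear φ : Q₀(f) → k with φ(E) = 1, the symmetric bilinear form β_φ is isometric to the orthogonal sum of n/2 copies of the hyperbolic plane ℍ when n is even, and to the orthogonal sum of (n−1)/2 copies of ℍ together with ⟨a⟩ when n is odd. -/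
set_option maxHeartbeats 1600000


open MvPolynomial Module

namespace EKL

variable (k : Type) [Field k]

section Helpers

variable {k}

lemma equiv_exists {a : k} (ha : a ≠ 0) {m : ℕ} (hm : 1 ≤ m)
    (f : Fin 1 → MvPolynomial (Fin 1) k) (hf : f = ![C a * X 0 ^ m]) :
    ∃ e : Q0 k f ≃ₐ[k] AdjoinRoot ((Polynomial.X : Polynomial k) ^ m),
      ∀ p : MvPolynomial (Fin 1) k,
        e (toQ0 k f p) = MvPolynomial.aeval (fun _ => AdjoinRoot.root _) p := by
  set R := AdjoinRoot ((Polynomial.X : Polynomial k) ^ m) with hR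
  set θ : R := AdjoinRoot.root _ with hθdef
  have hθ : θ ^ m = 0 := by
    have : θ ^ m = AdjoinRoot.mk _ ((Polynomial.X : Polynomial k) ^ m) := by
      rw [map_pow, AdjoinRoot.mk_X]
    rw [this, AdjoinRoot.mk_self]
  set g : MvPolynomial (Fin 1) k →ₐ[k] R := MvPolynomial.aeval (fun _ => θ) with hg
  have hgX : ∀ i, g (MvPolynomial.X i) = θ := fun i => MvPolynomial.aeval_X _ i
  have hgC : ∀ c, g (C c) = algebraMap k R c := fun c => MvPolynomial.aeval_C _ c
  have hnil : ∀ p : MvPolynomial (Fin 1) k,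
      IsNilpotent (g p - algebraMap k R (constantCoeff p)) := by
    intro p
    induction p using MvPolynomial.induction_on with
    | C c => simp [MvPolynomial.aeval_C]; exact IsNilpotent.zero
    | add p q hp hq =>
        have := (Commute.all _ _).isNilpotent_add hp hq
        simpa [map_add, add_sub_add_comm] using this
    | mul_X p i hp =>
        have h1 : IsNilpotent (g p * θ) := (Commute.all _ _).isNilpotent_mul_left ⟨m, hθ⟩
        have h2 : g (p * X i) - algebraMap k R (constantCoeff (p * X i)) = g p * θ := by
          rw [map_mul, hgX, map_mul, constantCoeff_X, mul_zero, map_zero, sub_zero]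
        rw [h2]; exact h1
  have hunit : ∀ s : S k 1, IsUnit (g s) := by
    rintro ⟨s, hs⟩
    have hu : IsUnit (algebraMap k R (constantCoeff s)) :=
      RingHom.isUnit_map _ (isUnit_iff_ne_zero.mpr hs)
    have := (hnil s).isUnit_add_left_of_commute hu (Commute.all _ _)
    simpa using this
  -- the lift to the localization
  set fwdLoc : Loc k 1 →ₐ[k] R := IsLocalization.liftAlgHom (M := S k 1) hunit with hfwdLoc
  have hfwdLoc_alg : ∀ p : MvPolynomial (Fin 1) k,
      fwdLoc (algebraMap (MvPolynomial (Fin 1) k) (Loc k 1) p) = g p := by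
    intro p
    rw [hfwdLoc]
    exact IsLocalization.lift_eq hunit p
  -- kills the ideal
  have hker : ∀ x ∈ idealOf k f, fwdLoc x = 0 := by
    intro x hx
    have hle : idealOf k f ≤ RingHom.ker (fwdLoc : Loc k 1 →+* R) := by
      rw [idealOf, Ideal.span_le]
      rintro _ ⟨i, rfl⟩
      have hi : f i = C a * X 0 ^ m := by
        rw [hf]; fin_cases i <;> simp
      simp only [SetLike.mem_coe, RingHom.mem_ker]
      show fwdLoc (algebraMap _ _ (f i)) = 0
      rw [hfwdLoc_alg, hi, map_mul, map_pow, hgX, hgC, hθ, mul_zero]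
    exact hle hx
  set fwdQ : Q0 k f →ₐ[k] R := Ideal.Quotient.liftₐ (idealOf k f) fwdLoc hker with hfwdQ
  have hfwdQ_toQ0 : ∀ p : MvPolynomial (Fin 1) k, fwdQ (toQ0 k f p) = g p := by
    intro p
    show fwdQ (Ideal.Quotient.mk _ (algebraMap _ _ p)) = g p
    rw [hfwdQ]
    show fwdLoc (algebraMap _ _ p) = g p
    exact hfwdLoc_alg p
  -- backward map
  set ξ : Q0 k f := toQ0 k f (X 0) with hξdef
  have hCa : IsUnit (toQ0 k f (C a)) := by
    have : (toQ0 k f) (C a) = (algebraMap k (Q0 k f) : k →+* Q0 k f) a := by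
      rw [show (C a : MvPolynomial (Fin 1) k) = algebraMap k _ a from rfl]
      show Ideal.Quotient.mk _ (algebraMap _ _ (algebraMap k _ a)) = _
      rw [← IsScalarTower.algebraMap_apply,
        IsScalarTower.algebraMap_apply k (Loc k 1) (Q0 k f), Ideal.Quotient.algebraMap_eq]
    rw [this]
    exact RingHom.isUnit_map _ (isUnit_iff_ne_zero.mpr ha)
  have hξm : ξ ^ m = 0 := by
    have h0 : toQ0 k f (f 0) = 0 := by
      apply Ideal.Quotient.eq_zero_iff_mem.mpr
      exact Ideal.subset_span ⟨0, rfl⟩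
    have h1 : toQ0 k f (C a) * ξ ^ m = 0 := by
      rw [hξdef, ← map_pow, ← map_mul, ← show f 0 = C a * X 0 ^ m by rw [hf]; simp, h0]
    exact (IsUnit.mul_right_eq_zero (M₀ := Q0 k f) hCa).mp h1
  have haev : Polynomial.aeval ξ ((Polynomial.X : Polynomial k) ^ m) = 0 := by
    rw [map_pow, Polynomial.aeval_X, hξm]
  set bwd : R →ₐ[k] Q0 k f := AdjoinRoot.liftAlgHom _ (Algebra.ofId k (Q0 k f)) ξ
    (by rw [Polynomial.aeval_def] at haev; exact haev) with hbwd
  have hbwdθ : bwd θ = ξ := by rw [hbwd, hθdef]; exact AdjoinRoot.liftAlgHom_root _ _ _ _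
  -- mutual inverses
  have h1 : ∀ x, fwdQ (bwd x) = x := by
    have : fwdQ.comp bwd = AlgHom.id k R := by
      apply AdjoinRoot.algHom_ext
      rw [AlgHom.comp_apply, ← hθdef, hbwdθ, hξdef, hfwdQ_toQ0, hgX, AlgHom.id_apply]
    intro x
    exact congrArg (fun h => h x) (congrArg DFunLike.coe this)
  have h2 : ∀ x, bwd (fwdQ x) = x := by
    have key : (bwd.comp fwdQ : Q0 k f →+* Q0 k f) = RingHom.id _ := by
      apply Ideal.Quotient.ringHom_ext
      apply IsLocalization.ringHom_ext (S k 1)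
      apply MvPolynomial.ringHom_ext
      · intro c
        show bwd (fwdQ (toQ0 k f (C c))) = toQ0 k f (C c)
        rw [hfwdQ_toQ0, hgC]
        have hQ : (toQ0 k f) (C c) = (algebraMap k (Q0 k f) : k →+* Q0 k f) c := by
          show Ideal.Quotient.mk _ (algebraMap _ _ (algebraMap k _ c)) = _
          rw [← IsScalarTower.algebraMap_apply,
            IsScalarTower.algebraMap_apply k (Loc k 1) (Q0 k f), Ideal.Quotient.algebraMap_eq]
        rw [hQ, AlgHom.commutes]
      · intro i
        show bwd (fwdQ (toQ0 k f (X i))) = toQ0 k f (X i)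
        have : (i : Fin 1) = 0 := Subsingleton.elim _ _
        rw [this, hfwdQ_toQ0, hgX, hbwdθ, hξdef]
    intro x
    exact congrArg (fun h => h x) (congrArg DFunLike.coe key)
  refine ⟨AlgEquiv.ofAlgHom fwdQ bwd (AlgHom.ext h1) (AlgHom.ext h2), ?_⟩
  intro p
  exact hfwdQ_toQ0 p

lemma exists_good (hchar : ringChar k ≠ 2) {a : k} (ha : a ≠ 0) {m : ℕ} (hm : 2 ≤ m)
    (ψ : AdjoinRoot ((Polynomial.X : Polynomial k) ^ m) →ₗ[k] k)
    (hψ : ψ ((AdjoinRoot.root ((Polynomial.X : Polynomial k) ^ m)) ^ (m - 1)) = a⁻¹) :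
    ∃ p : AdjoinRoot ((Polynomial.X : Polynomial k) ^ m), IsUnit p ∧
      ∀ s t : ℕ, ψ (p * (AdjoinRoot.root _) ^ s * (p * (AdjoinRoot.root _) ^ t)) =
        if s + t = m - 1 then a⁻¹ else 0 := by
  have h2 : (2 : k) ≠ 0 := Ring.two_ne_zero hchar
  set R := AdjoinRoot ((Polynomial.X : Polynomial k) ^ m) with hR
  set θ : R := AdjoinRoot.root _ with hθdef
  have hθ : θ ^ m = 0 := by
    have : θ ^ m = AdjoinRoot.mk _ ((Polynomial.X : Polynomial k) ^ m) := by
      rw [map_pow, AdjoinRoot.mk_X]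
    rw [this, AdjoinRoot.mk_self]
  have hθ' : ∀ t : ℕ, m ≤ t → θ ^ t = 0 := by
    intro t ht
    rw [show t = m + (t - m) by omega, pow_add, hθ, zero_mul]
  have hsmul : ∀ (c : k) (x : R), ψ (algebraMap k R c * x) = c * ψ x := by
    intro c x
    rw [← Algebra.smul_def, map_smul, smul_eq_mul]
  -- main induction
  have key : ∀ j : ℕ, ∃ q : R, ∀ s, s < m - 1 → m - 1 - j ≤ s →
      ψ ((1 + θ * q) ^ 2 * θ ^ s) = 0 := by
    intro j
    induction j with
    | zero => exact ⟨0, fun s h1 h2 => absurd (lt_of_lt_of_le h1 (le_refl _)) (by omega)⟩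
    | succ j ih =>
        obtain ⟨q, hq⟩ := ih
        set p : R := 1 + θ * q with hp
        set v : k := ψ (p ^ 2 * θ ^ (m - 2 - j)) with hv
        set t : k := -(a / 2) * v with ht
        refine ⟨q + algebraMap k R t * θ ^ j, fun s hs1 hs2 => ?_⟩
        have hexp : (1 + θ * (q + algebraMap k R t * θ ^ j)) ^ 2 * θ ^ s =
            p ^ 2 * θ ^ s + algebraMap k R (2 * t) * (p * θ ^ (s + j + 1))
              + algebraMap k R (t * t) * θ ^ (s + 2 * j + 2) := by
          rw [hp, map_mul (algebraMap k R) 2, map_mul (algebraMap k R) t,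
            show ((algebraMap k R) 2 : R) = 2 from map_ofNat _ 2, pow_add, pow_add,
            pow_add, pow_add]
          ring
        rw [hexp, map_add, map_add, hsmul, hsmul]
        by_cases hcase : m - 1 - j ≤ s
        · have e1 : θ ^ (s + j + 1) = 0 := hθ' _ (by omega)
          have e2 : θ ^ (s + 2 * j + 2) = 0 := hθ' _ (by omega)
          rw [hq s hs1 hcase, e1, e2]
          simp
        · -- s = m - 2 - j, the new case
          have hs : s = m - 2 - j := by omega
          have hsj : s + j + 1 = m - 1 := by omega
          have e2 : θ ^ (s + 2 * j + 2) = 0 := hθ' _ (by omega)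
          have e3 : p * θ ^ (m - 1) = θ ^ (m - 1) := by
            have hmm : θ ^ (m - 1) * θ = 0 := by
              rw [← pow_succ, show m - 1 + 1 = m by omega, hθ]
            rw [hp]
            calc (1 + θ * q) * θ ^ (m - 1) = θ ^ (m - 1) + θ ^ (m - 1) * θ * q := by ring
              _ = θ ^ (m - 1) := by rw [hmm, zero_mul, add_zero]
          rw [hsj, e3, e2, hψ, hs, ← hv, ht, map_zero]
          field_simp
          ring
  obtain ⟨q, hq⟩ := key m
  set p : R := 1 + θ * q with hp
  have hq' : ∀ s, s < m - 1 → ψ (p ^ 2 * θ ^ s) = 0 := fun s hs => hq s hs (by omega)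
  have hpu : IsUnit p := by
    have : IsNilpotent (θ * q) := by
      refine ⟨m, ?_⟩
      rw [mul_pow, hθ, zero_mul]
    simpa [hp, add_comm] using this.isUnit_add_one
  refine ⟨p, hpu, fun s t => ?_⟩
  have hcomb : p * θ ^ s * (p * θ ^ t) = p ^ 2 * θ ^ (s + t) := by
    rw [pow_add]; ring
  rw [hcomb]
  rcases lt_trichotomy (s + t) (m - 1) with h | h | h
  · rw [if_neg (by omega), hq' _ h]
  · have e3 : p ^ 2 * θ ^ (m - 1) = θ ^ (m - 1) := by
      have hmm : θ ^ (m - 1) * θ = 0 := by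
        rw [← pow_succ, show m - 1 + 1 = m by omega, hθ]
      calc p ^ 2 * θ ^ (m - 1) = θ ^ (m - 1) + θ ^ (m - 1) * θ * (2 * q + θ * q ^ 2) := by
            rw [hp]; ring
        _ = θ ^ (m - 1) := by rw [hmm, zero_mul, add_zero]
    rw [if_pos h, h, e3, hψ]
  · rw [if_neg (by omega), hθ' _ (by omega), mul_zero, map_zero]

lemma diag_isometry {V : Type} [AddCommGroup V] [Module k V] [FiniteDimensional k V]
    {M : ℕ} (hM : 0 < M) (hrank : Module.finrank k V = M)
    (B : V →ₗ[k] V →ₗ[k] k) (c : Fin M → k) (hc : ∀ i, c i ≠ 0)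
    (u : Fin M → V) (hu : ∀ i j, B (u i) (u j) = if i = j then c i else 0) :
    Isometric k V (Fin M → k) B (diagForm k M c) := by
  haveI : Nonempty (Fin M) := ⟨⟨0, hM⟩⟩
  have li : LinearIndependent k u := by
    rw [Fintype.linearIndependent_iff]
    intro g hg j
    have h2 : ∑ i, g i * (if i = j then c i else 0) = 0 := by
      calc ∑ i, g i * (if i = j then c i else 0)
          = ∑ i, g i * B (u i) (u j) := by
            refine Finset.sum_congr rfl fun i _ => by rw [hu]
        _ = B (∑ i, g i • u i) (u j) := by
            rw [map_sum, LinearMap.sum_apply]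
            refine Finset.sum_congr rfl fun i _ => by rw [map_smul]; rfl
        _ = 0 := by rw [hg, map_zero, LinearMap.zero_apply]
    rw [Finset.sum_eq_single j (fun i _ hij => by rw [if_neg hij, mul_zero])
      (fun h => absurd (Finset.mem_univ j) h), if_pos rfl] at h2
    exact (mul_eq_zero.mp h2).resolve_right (hc j)
  let bu := basisOfLinearIndependentOfCardEqFinrank li (by simp [hrank])
  have hbu : ∀ i, bu i = u i := fun i =>
    congrFun (coe_basisOfLinearIndependentOfCardEqFinrank li _) i
  refine ⟨bu.equivFun, ?_⟩
  have key : (diagForm k M c).compl₁₂ (bu.equivFun : V →ₗ[k] (Fin M → k))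
      (bu.equivFun : V →ₗ[k] (Fin M → k)) = B := by
    apply LinearMap.ext_basis bu bu
    intro i j
    rw [LinearMap.compl₁₂_apply]
    have hev : ∀ i : Fin M, (bu.equivFun : V →ₗ[k] (Fin M → k)) (bu i)
        = fun t => if i = t then 1 else 0 := by
      intro i; funext t
      simp [Basis.equivFun_self, eq_comm]
    rw [hev, hev, hbu, hbu, hu]
    simp only [diagForm, LinearMap.mk₂_apply]
    rw [Finset.sum_eq_single i (fun t _ hti => by
        rw [if_neg fun h => hti h.symm, mul_zero, zero_mul])
      (fun h => absurd (Finset.mem_univ i) h)]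
    by_cases hij : i = j
    · subst hij; simp
    · rw [if_neg hij, if_neg (fun h : j = i => hij h.symm)]; ring
  intro v w
  conv_rhs => rw [← key]
  rfl

end Helpers


theorem stmt3 (hchar : ringChar k ≠ 2) (a : k) (ha : a ≠ 0) (m : ℕ) (hm : 2 ≤ m)
    (f : Fin 1 → MvPolynomial (Fin 1) k) (hf : f = ![C a * X 0 ^ m]) :
    Nonempty (Q0 k f ≃ₐ[k] (Polynomial k ⧸ Ideal.span {(Polynomial.X : Polynomial k) ^ m})) ∧
    ∀ A : Matrix (Fin 1) (Fin 1) (MvPolynomial (Fin 1) k), IsSocleMatrix k f A →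
      ∀ φ : Q0 k f →ₗ[k] k, φ (toQ0 k f A.det) = 1 →
        (∀ r : ℕ, m = 2 * r →
          Isometric k (Q0 k f) (Fin (2 * r) → k) (beta k (V := Q0 k f) φ) (diagForm k (2 * r) (hypDiag k r))) ∧
        (∀ r : ℕ, m = 2 * r + 1 →
          Isometric k (Q0 k f) (Fin (2 * r + 1) → k) (beta k (V := Q0 k f) φ)
            (diagForm k (2 * r + 1) (Fin.append (hypDiag k r) ![a]))) := by
  have h2 : (2 : k) ≠ 0 := Ring.two_ne_zero hchar
  have hm1 : 1 ≤ m := by omega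
  obtain ⟨e₀, he₀⟩ := equiv_exists ha hm1 f hf
  refine ⟨⟨e₀⟩, ?_⟩
  intro A hA φ hφ
  set R := AdjoinRoot ((Polynomial.X : Polynomial k) ^ m) with hRdef
  set θ : R := AdjoinRoot.root _ with hθdef
  set ψ : R →ₗ[k] k := φ ∘ₗ (e₀.symm.toLinearMap) with hψdef
  have hψφ : ∀ z, ψ (e₀ z) = φ z := by
    intro z
    rw [hψdef]
    simp
  have hsmul : ∀ (c : k) (x : R), ψ (algebraMap k R c * x) = c * ψ x := by
    intro c x
    rw [← Algebra.smul_def, map_smul, smul_eq_mul]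
  -- identify the determinant
  have h0 : f 0 = A 0 0 * X 0 := by rw [hA 0, Fin.sum_univ_one]
  have h1 : (C a * X 0 ^ (m - 1)) * X 0 = A 0 0 * X 0 := by
    rw [← h0, hf]
    show _ = C a * X 0 ^ m
    rw [mul_assoc, ← pow_succ, show m - 1 + 1 = m by omega]
  have hAdet : A.det = C a * X 0 ^ (m - 1) := by
    rw [Matrix.det_fin_one]
    exact (mul_right_cancel₀ (MvPolynomial.X_ne_zero 0) h1).symm
  have hE : e₀ (toQ0 k f A.det) = algebraMap k R a * θ ^ (m - 1) := by
    rw [hAdet, he₀, map_mul, map_pow, MvPolynomial.aeval_X, MvPolynomial.aeval_C]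
  have htop1 : a * ψ (θ ^ (m - 1)) = 1 := by
    calc a * ψ (θ ^ (m - 1)) = ψ (algebraMap k R a * θ ^ (m - 1)) := (hsmul _ _).symm
      _ = ψ (e₀ (toQ0 k f A.det)) := by rw [hE]
      _ = φ (toQ0 k f A.det) := hψφ _
      _ = 1 := hφ
  have hψtop : ψ (θ ^ (m - 1)) = a⁻¹ := by
    have : ψ (θ ^ (m - 1)) = a⁻¹ * (a * ψ (θ ^ (m - 1))) := by
      field_simp
    rw [this, htop1, mul_one]
  obtain ⟨p, hpu, hGram⟩ := exists_good hchar ha hm ψ hψtop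
  have hprod : ∀ (c d : k) (s t : ℕ),
      ψ ((algebraMap k R c * (p * θ ^ s)) * (algebraMap k R d * (p * θ ^ t)))
        = c * d * (if s + t = m - 1 then a⁻¹ else 0) := by
    intro c d s t
    have hx : (algebraMap k R c * (p * θ ^ s)) * (algebraMap k R d * (p * θ ^ t))
        = algebraMap k R c * (algebraMap k R d * (p * θ ^ s * (p * θ ^ t))) := by ring
    rw [hx, hsmul, hsmul, hθdef, hGram]
    ring
  have transfer : ∀ {M : ℕ} (c : Fin M → k),
      Isometric k R (Fin M → k) (beta k ψ) (diagForm k M c) →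
      Isometric k (Q0 k f) (Fin M → k) (beta k (V := Q0 k f) φ) (diagForm k M c) := by
    rintro M c ⟨eR, heR⟩
    refine ⟨e₀.toLinearEquiv.trans eR, fun v w => ?_⟩
    have hb : beta k ψ (e₀ v) (e₀ w) = beta k (V := Q0 k f) φ v w := by
      show ψ (e₀ v * e₀ w) = φ (v * w)
      rw [← map_mul]
      exact hψφ _
    rw [← hb]
    exact heR _ _
  have hne : ((Polynomial.X : Polynomial k) ^ m) ≠ 0 := pow_ne_zero _ Polynomial.X_ne_zero
  haveI : FiniteDimensional k R := Module.Finite.of_basis (AdjoinRoot.powerBasis hne).basis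
  have hfinrank : finrank k R = m := by
    rw [(AdjoinRoot.powerBasis hne).finrank]
    exact Polynomial.natDegree_X_pow m
  constructor
  · -- even case
    intro r hr
    subst hr
    apply transfer
    refine diag_isometry (M := 2 * r) (by omega) hfinrank (beta k ψ) _ (fun i => ?_)
      (fun i => algebraMap k R 1 * (p * θ ^ (i.val / 2))
        + algebraMap k R ((if i.val % 2 = 0 then (1 : k) else -1) * (a / 2))
            * (p * θ ^ (2 * r - 1 - i.val / 2)))
      (fun i j => ?_)
    · unfold hypDiag
      split
      · exact one_ne_zero
      · exact neg_ne_zero.mpr one_ne_zero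
    · have hi := i.isLt
      have hj := j.isLt
      have hBij : beta k ψ
          (algebraMap k R 1 * (p * θ ^ (i.val / 2))
            + algebraMap k R ((if i.val % 2 = 0 then (1 : k) else -1) * (a / 2))
                * (p * θ ^ (2 * r - 1 - i.val / 2)))
          (algebraMap k R 1 * (p * θ ^ (j.val / 2))
            + algebraMap k R ((if j.val % 2 = 0 then (1 : k) else -1) * (a / 2))
                * (p * θ ^ (2 * r - 1 - j.val / 2))) =
          1 * 1 * (if i.val / 2 + j.val / 2 = 2 * r - 1 then a⁻¹ else 0)
          + 1 * ((if j.val % 2 = 0 then (1 : k) else -1) * (a / 2))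
              * (if i.val / 2 + (2 * r - 1 - j.val / 2) = 2 * r - 1 then a⁻¹ else 0)
          + (((if i.val % 2 = 0 then (1 : k) else -1) * (a / 2)) * 1
              * (if (2 * r - 1 - i.val / 2) + j.val / 2 = 2 * r - 1 then a⁻¹ else 0)
          + ((if i.val % 2 = 0 then (1 : k) else -1) * (a / 2))
              * ((if j.val % 2 = 0 then (1 : k) else -1) * (a / 2))
              * (if (2 * r - 1 - i.val / 2) + (2 * r - 1 - j.val / 2) = 2 * r - 1
                  then a⁻¹ else 0)) := by
        show ψ _ = _
        rw [add_mul, mul_add, mul_add, map_add, map_add, map_add, hprod, hprod, hprod, hprod]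
      rw [hBij]
      have c1 : ¬(i.val / 2 + j.val / 2 = 2 * r - 1) := by omega
      have c4 : ¬((2 * r - 1 - i.val / 2) + (2 * r - 1 - j.val / 2) = 2 * r - 1) := by omega
      by_cases hij : i = j
      · subst hij
        have c2 : i.val / 2 + (2 * r - 1 - i.val / 2) = 2 * r - 1 := by omega
        have c3 : (2 * r - 1 - i.val / 2) + i.val / 2 = 2 * r - 1 := by omega
        rw [if_pos rfl, if_neg c1, if_pos c2, if_pos c3, if_neg c4]
        show _ = hypDiag k r i
        unfold hypDiag
        rcases Nat.mod_two_eq_zero_or_one i.val with hp2 | hp2 <;>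
          simp only [hp2] <;> norm_num <;> field_simp <;> ring
      · rw [if_neg hij]
        by_cases hq2 : i.val / 2 = j.val / 2
        · have hne' : i.val ≠ j.val := fun h => hij (Fin.ext h)
          have c2 : i.val / 2 + (2 * r - 1 - j.val / 2) = 2 * r - 1 := by omega
          have c3 : (2 * r - 1 - i.val / 2) + j.val / 2 = 2 * r - 1 := by omega
          rw [if_neg c1, if_pos c2, if_pos c3, if_neg c4]
          have hpar : i.val % 2 ≠ j.val % 2 := by omega
          rcases Nat.mod_two_eq_zero_or_one i.val with hi0 | hi0 <;>
            rcases Nat.mod_two_eq_zero_or_one j.val with hj0 | hj0 <;>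
            simp only [hi0, hj0] at hpar ⊢ <;>
            first
              | omega
              | (norm_num; try ring)
        · have c2 : ¬(i.val / 2 + (2 * r - 1 - j.val / 2) = 2 * r - 1) := by omega
          have c3 : ¬((2 * r - 1 - i.val / 2) + j.val / 2 = 2 * r - 1) := by omega
          rw [if_neg c1, if_neg c2, if_neg c3, if_neg c4]
          ring
  · -- odd case
    intro r hr
    subst hr
    apply transfer
    refine diag_isometry (M := 2 * r + 1) (by omega) hfinrank (beta k ψ) _ (fun i => ?_)
      (fun i => algebraMap k R (if i.val = 2 * r then a else 1) * (p * θ ^ (i.val / 2))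
        + algebraMap k R (if i.val = 2 * r then 0
            else (if i.val % 2 = 0 then (1 : k) else -1) * (a / 2))
            * (p * θ ^ (2 * r + 1 - 1 - i.val / 2)))
      (fun i j => ?_)
    · -- coefficients nonzero
      have happ : Fin.append (hypDiag k r) ![a] i =
          if h : i.val < 2 * r then hypDiag k r ⟨i.val, h⟩ else a := by
        by_cases h : i.val < 2 * r
        · rw [dif_pos h]
          conv_lhs => rw [show i = Fin.castAdd 1 ⟨i.val, h⟩ from Fin.ext rfl]
          rw [Fin.append_left]
        · have hi : i.val = 2 * r := by have := i.isLt; omega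
          rw [dif_neg h]
          conv_lhs => rw [show i = Fin.natAdd (2 * r) ⟨0, one_pos⟩ from Fin.ext (by simp [hi])]
          rw [Fin.append_right]
          simp
      rw [happ]
      split
      · unfold hypDiag
        split
        · exact one_ne_zero
        · exact neg_ne_zero.mpr one_ne_zero
      · exact ha
    · have hi := i.isLt
      have hj := j.isLt
      have hBij : beta k ψ
          (algebraMap k R (if i.val = 2 * r then a else 1) * (p * θ ^ (i.val / 2))
            + algebraMap k R (if i.val = 2 * r then 0
                else (if i.val % 2 = 0 then (1 : k) else -1) * (a / 2))
                * (p * θ ^ (2 * r + 1 - 1 - i.val / 2)))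
          (algebraMap k R (if j.val = 2 * r then a else 1) * (p * θ ^ (j.val / 2))
            + algebraMap k R (if j.val = 2 * r then 0
                else (if j.val % 2 = 0 then (1 : k) else -1) * (a / 2))
                * (p * θ ^ (2 * r + 1 - 1 - j.val / 2))) =
          (if i.val = 2 * r then a else 1) * (if j.val = 2 * r then a else 1)
              * (if i.val / 2 + j.val / 2 = 2 * r + 1 - 1 then a⁻¹ else 0)
          + (if i.val = 2 * r then a else 1) * (if j.val = 2 * r then 0
                else (if j.val % 2 = 0 then (1 : k) else -1) * (a / 2))
              * (if i.val / 2 + (2 * r + 1 - 1 - j.val / 2) = 2 * r + 1 - 1 then a⁻¹ else 0)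
          + ((if i.val = 2 * r then 0
                else (if i.val % 2 = 0 then (1 : k) else -1) * (a / 2))
              * (if j.val = 2 * r then a else 1)
              * (if (2 * r + 1 - 1 - i.val / 2) + j.val / 2 = 2 * r + 1 - 1 then a⁻¹ else 0)
          + (if i.val = 2 * r then 0
                else (if i.val % 2 = 0 then (1 : k) else -1) * (a / 2))
              * (if j.val = 2 * r then 0
                else (if j.val % 2 = 0 then (1 : k) else -1) * (a / 2))
              * (if (2 * r + 1 - 1 - i.val / 2) + (2 * r + 1 - 1 - j.val / 2) = 2 * r + 1 - 1
                  then a⁻¹ else 0)) := by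
        show ψ _ = _
        rw [add_mul, mul_add, mul_add, map_add, map_add, map_add, hprod, hprod, hprod, hprod]
      rw [hBij]
      have happ : ∀ t : Fin (2 * r + 1), Fin.append (hypDiag k r) ![a] t =
          if h : t.val < 2 * r then hypDiag k r ⟨t.val, h⟩ else a := by
        intro t
        by_cases h : t.val < 2 * r
        · rw [dif_pos h]
          conv_lhs => rw [show t = Fin.castAdd 1 ⟨t.val, h⟩ from Fin.ext rfl]
          rw [Fin.append_left]
        · have ht : t.val = 2 * r := by have := t.isLt; omega
          rw [dif_neg h]
          conv_lhs => rw [show t = Fin.natAdd (2 * r) ⟨0, one_pos⟩ from Fin.ext (by simp [ht])]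
          rw [Fin.append_right]
          simp
      by_cases hilast : i.val = 2 * r <;> by_cases hjlast : j.val = 2 * r
      · -- both last: i = j
        have hij : i = j := Fin.ext (by omega)
        subst hij
        have hnl : ¬(i.val < 2 * r) := by omega
        have q1 : i.val / 2 + i.val / 2 = 2 * r + 1 - 1 := by omega
        have q2 : i.val / 2 + (2 * r + 1 - 1 - i.val / 2) = 2 * r + 1 - 1 := by omega
        have q3 : (2 * r + 1 - 1 - i.val / 2) + i.val / 2 = 2 * r + 1 - 1 := by omega
        have q4 : (2 * r + 1 - 1 - i.val / 2) + (2 * r + 1 - 1 - i.val / 2)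
            = 2 * r + 1 - 1 := by omega
        rw [if_pos rfl, happ, dif_neg hnl, if_pos hilast, if_pos hilast, if_pos q1, if_pos q2,
          if_pos q3, if_pos q4]
        field_simp
        simp
      · -- i last, j not
        have hij : i ≠ j := fun h => hjlast (h ▸ hilast)
        have hdi : i.val / 2 = r := by omega
        have hdj : j.val / 2 < r := by omega
        have q1 : ¬(i.val / 2 + j.val / 2 = 2 * r + 1 - 1) := by omega
        have q2 : ¬(i.val / 2 + (2 * r + 1 - 1 - j.val / 2) = 2 * r + 1 - 1) := by omega
        have q3 : ¬((2 * r + 1 - 1 - i.val / 2) + j.val / 2 = 2 * r + 1 - 1) := by omega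
        have q4 : ¬((2 * r + 1 - 1 - i.val / 2) + (2 * r + 1 - 1 - j.val / 2)
            = 2 * r + 1 - 1) := by omega
        rw [if_neg hij, if_pos hilast, if_neg hjlast, if_pos hilast, if_neg hjlast,
          if_neg q1, if_neg q2, if_neg q3, if_neg q4]
        ring
      · -- j last, i not
        have hij : i ≠ j := fun h => hilast (h ▸ hjlast)
        have hdj : j.val / 2 = r := by omega
        have hdi : i.val / 2 < r := by omega
        have q1 : ¬(i.val / 2 + j.val / 2 = 2 * r + 1 - 1) := by omega
        have q2 : ¬(i.val / 2 + (2 * r + 1 - 1 - j.val / 2) = 2 * r + 1 - 1) := by omega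
        have q3 : ¬((2 * r + 1 - 1 - i.val / 2) + j.val / 2 = 2 * r + 1 - 1) := by omega
        have q4 : ¬((2 * r + 1 - 1 - i.val / 2) + (2 * r + 1 - 1 - j.val / 2)
            = 2 * r + 1 - 1) := by omega
        rw [if_neg hij, if_neg hilast, if_pos hjlast, if_neg hilast, if_pos hjlast,
          if_neg q1, if_neg q2, if_neg q3, if_neg q4]
        ring
      · -- neither last
        rw [if_neg hilast, if_neg hjlast, if_neg hilast, if_neg hjlast]
        have hdi : i.val / 2 < r := by omega
        have hdj : j.val / 2 < r := by omega
        have c1 : ¬(i.val / 2 + j.val / 2 = 2 * r + 1 - 1) := by omega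
        have c4 : ¬((2 * r + 1 - 1 - i.val / 2) + (2 * r + 1 - 1 - j.val / 2)
            = 2 * r + 1 - 1) := by omega
        by_cases hij : i = j
        · subst hij
          have hl : i.val < 2 * r := by omega
          have c2 : i.val / 2 + (2 * r + 1 - 1 - i.val / 2) = 2 * r + 1 - 1 := by omega
          have c3 : (2 * r + 1 - 1 - i.val / 2) + i.val / 2 = 2 * r + 1 - 1 := by omega
          rw [if_pos rfl, happ, dif_pos hl, if_neg c1, if_pos c2, if_pos c3, if_neg c4]
          unfold hypDiag
          rcases Nat.mod_two_eq_zero_or_one i.val with hp2 | hp2 <;>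
            simp only [hp2] <;> norm_num <;> field_simp <;> ring
        · rw [if_neg hij]
          by_cases hq2 : i.val / 2 = j.val / 2
          · have hne' : i.val ≠ j.val := fun h => hij (Fin.ext h)
            have c2 : i.val / 2 + (2 * r + 1 - 1 - j.val / 2) = 2 * r + 1 - 1 := by omega
            have c3 : (2 * r + 1 - 1 - i.val / 2) + j.val / 2 = 2 * r + 1 - 1 := by omega
            rw [if_neg c1, if_pos c2, if_pos c3, if_neg c4]
            have hpar : i.val % 2 ≠ j.val % 2 := by omega
            rcases Nat.mod_two_eq_zero_or_one i.val with hi0 | hi0 <;>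
              rcases Nat.mod_two_eq_zero_or_one j.val with hj0 | hj0 <;>
              simp only [hi0, hj0] at hpar ⊢ <;>
              first
                | omega
                | (norm_num; try ring)
          · have c2 : ¬(i.val / 2 + (2 * r + 1 - 1 - j.val / 2) = 2 * r + 1 - 1) := by omega
            have c3 : ¬((2 * r + 1 - 1 - i.val / 2) + j.val / 2 = 2 * r + 1 - 1) := by omega
            rw [if_neg c1, if_neg c2, if_neg c3, if_neg c4]
            ring


end EKL
end

section
/- Let k be a field with char(k) ≠ 2 and let f : 𝔸ⁿ → 𝔸ⁿ be a polynomial map vanishing at 0 with an isolated zero at 0 such that the ideal (f₁,…,fₙ) is contained in 𝔪² = (x₁,…,xₙ)². Then dim_k Q₀(f) ≥ 2ⁿ. -/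
open MvPolynomial Module

namespace EKL

variable (k : Type) [Field k]

namespace Aux

variable {k} {n : ℕ}

/-- total degree of an exponent vector -/
def deg (d : Fin n →₀ ℕ) : ℕ := ∑ i, d i

lemma deg_add (a b : Fin n →₀ ℕ) : deg (a + b) = deg a + deg b := by
  simp [deg, Finset.sum_add_distrib]

lemma deg_eq_zero {d : Fin n →₀ ℕ} (h : deg d = 0) : d = 0 := by
  ext i
  have := Finset.sum_eq_zero_iff.mp h i (Finset.mem_univ i)
  simpa using this

lemma X_mem_m (i : Fin n) : (X i : MvPolynomial (Fin n) k) ∈ mIdeal k n :=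
  Ideal.subset_span ⟨i, rfl⟩

lemma constantCoeff_eq_zero_of_mem_m {p : MvPolynomial (Fin n) k}
    (h : p ∈ mIdeal k n) : constantCoeff p = 0 := by
  have : mIdeal k n ≤ RingHom.ker (constantCoeff (σ := Fin n) (R := k)) := by
    rw [mIdeal, Ideal.span_le]
    rintro q ⟨i, rfl⟩
    simp [RingHom.mem_ker]
  simpa [RingHom.mem_ker] using this h

lemma coeff_eq_zero_of_mem_pow {t : ℕ} {p : MvPolynomial (Fin n) k}
    (hp : p ∈ mIdeal k n ^ t) {d : Fin n →₀ ℕ} (hd : deg d < t) : coeff d p = 0 := by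
  induction t generalizing p d with
  | zero => omega
  | succ t ih =>
    rw [pow_succ] at hp
    refine Submodule.mul_induction_on hp (fun a ha b hb => ?_) (fun x y hx hy => ?_)
    · rw [coeff_mul]
      apply Finset.sum_eq_zero
      rintro ⟨d₁, d₂⟩ hmem
      have hsum : d₁ + d₂ = d := Finset.HasAntidiagonal.mem_antidiagonal.mp hmem
      by_cases h2 : d₂ = 0
      · have : coeff d₂ b = 0 := by
          subst h2
          rw [← constantCoeff_eq_zero_of_mem_m hb, MvPolynomial.constantCoeff_eq]
        simp [this]
      · have hdeg2 : 1 ≤ deg d₂ := by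
          rcases Nat.eq_zero_or_pos (deg d₂) with h0 | h0
          · exact absurd (deg_eq_zero h0) h2
          · exact h0
        have : deg d₁ < t := by
          have := deg_add d₁ d₂
          rw [hsum] at this
          omega
        rw [ih ha this, zero_mul]
    · simp [hx, hy]

lemma prod_mem_pow {ι : Type} (s : Finset ι) (g : ι → MvPolynomial (Fin n) k) (e : ι → ℕ)
    (h : ∀ i ∈ s, g i ∈ mIdeal k n ^ e i) : (∏ i ∈ s, g i) ∈ mIdeal k n ^ (∑ i ∈ s, e i) := by
  classical
  induction s using Finset.induction_on with
  | empty => simp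
  | insert a s hni ih =>
    rw [Finset.prod_insert hni, Finset.sum_insert hni, pow_add]
    exact Ideal.mul_mem_mul (h a (Finset.mem_insert_self a s))
      (ih fun i hi => h i (Finset.mem_insert_of_mem hi))

lemma monomial_mem_pow {d : Fin n →₀ ℕ} {c : k} {t : ℕ} (h : t ≤ deg d) :
    (monomial d c : MvPolynomial (Fin n) k) ∈ mIdeal k n ^ t := by
  have hprod : (∏ i, (X i : MvPolynomial (Fin n) k) ^ d i) ∈ mIdeal k n ^ deg d := by
    apply prod_mem_pow
    intro i _
    exact Ideal.pow_mem_pow (X_mem_m i) _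
  have hle : mIdeal k n ^ deg d ≤ mIdeal k n ^ t := Ideal.pow_le_pow_right h
  have hmono : (monomial d c : MvPolynomial (Fin n) k) = C c * ∏ i, (X i) ^ d i := by
    rw [monomial_eq]
    congr 1
    rw [Finsupp.prod_fintype]
    intro i
    simp
  rw [hmono]
  exact Ideal.mul_mem_left _ _ (hle hprod)

lemma mem_m_of_constantCoeff_eq_zero {p : MvPolynomial (Fin n) k}
    (h : constantCoeff p = 0) : p ∈ mIdeal k n := by
  classical
  rw [← support_sum_monomial_coeff p]
  apply Ideal.sum_mem
  intro d hd
  by_cases h0 : d = 0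
  · subst h0
    have : coeff 0 p = 0 := by rw [← h, MvPolynomial.constantCoeff_eq]
    simp [this]
  · have hdeg : 1 ≤ deg d :=
      Nat.one_le_iff_ne_zero.mpr (fun hz => h0 (deg_eq_zero hz))
    have := monomial_mem_pow (d := d) (c := coeff d p) (t := 1) hdeg
    rwa [pow_one] at this

/-- simplex of lattice points -/
def MSg (m t : ℕ) : Finset (Fin m → ℕ) :=
  (Fintype.piFinset fun _ => Finset.range t).filter (fun v => ∑ i, v i < t)

lemma mem_MSg {m t : ℕ} {v : Fin m → ℕ} : v ∈ MSg m t ↔ ∑ i, v i < t := by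
  constructor
  · exact fun h => (Finset.mem_filter.mp h).2
  · intro h
    refine Finset.mem_filter.mpr ⟨Fintype.mem_piFinset.mpr fun i => Finset.mem_range.mpr ?_, h⟩
    exact lt_of_le_of_lt (Finset.single_le_sum (f := v) (fun _ _ => Nat.zero_le _)
      (Finset.mem_univ i)) h

variable (k n) in
/-- the Hilbert-Samuel-type function -/
noncomputable def Hd (J : Ideal (MvPolynomial (Fin n) k)) (t : ℕ) : ℕ :=
  finrank k (MvPolynomial (Fin n) k ⧸ (J ⊔ mIdeal k n ^ t))

lemma quot_finite {t : ℕ} (I : Ideal (MvPolynomial (Fin n) k)) (h : mIdeal k n ^ t ≤ I) :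
    Module.Finite k (MvPolynomial (Fin n) k ⧸ I) := by
  classical
  rw [Module.finite_def]
  refine ⟨((MSg n t).image fun v =>
    Ideal.Quotient.mk I (monomial (Finsupp.equivFunOnFinite.symm v) (1:k))), ?_⟩
  rw [eq_top_iff]
  rintro x -
  obtain ⟨p, rfl⟩ := Ideal.Quotient.mk_surjective x
  rw [← support_sum_monomial_coeff p, map_sum]
  apply Submodule.sum_mem
  intro d _
  by_cases hd : deg d < t
  · have h1 : (monomial d (coeff d p) : MvPolynomial (Fin n) k)
        = coeff d p • monomial d 1 := by
      rw [MvPolynomial.smul_monomial, smul_eq_mul, mul_one]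
    have h2 : Ideal.Quotient.mk I (monomial d (coeff d p))
        = coeff d p • Ideal.Quotient.mk I (monomial d 1) := by
      rw [h1, ← Ideal.Quotient.mkₐ_eq_mk k I, map_smul]
    rw [h2]
    apply Submodule.smul_mem
    apply Submodule.subset_span
    simp only [Finset.coe_image, Set.mem_image]
    exact ⟨Finsupp.equivFunOnFinite d, Finset.mem_coe.mpr (mem_MSg.mpr hd), by simp⟩
  · have : Ideal.Quotient.mk I (monomial d (coeff d p)) = 0 := by
      rw [Ideal.Quotient.eq_zero_iff_mem]
      exact h (monomial_mem_pow (Nat.le_of_not_lt hd))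
    rw [this]
    exact Submodule.zero_mem _

lemma finrank_quot_le_of_le {I J : Ideal (MvPolynomial (Fin n) k)} (hIJ : I ≤ J)
    [Module.Finite k (MvPolynomial (Fin n) k ⧸ I)] :
    finrank k (MvPolynomial (Fin n) k ⧸ J) ≤ finrank k (MvPolynomial (Fin n) k ⧸ I) := by
  let π : (MvPolynomial (Fin n) k ⧸ I) →ₗ[k] (MvPolynomial (Fin n) k ⧸ J) :=
    LinearMap.restrictScalars k (Submodule.mapQ I J LinearMap.id hIJ)
  have hsurj : Function.Surjective π := by
    intro y
    obtain ⟨p, rfl⟩ := Ideal.Quotient.mk_surjective y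
    exact ⟨Ideal.Quotient.mk I p, rfl⟩
  have h1 := LinearMap.finrank_range_add_finrank_ker π
  rw [LinearMap.range_eq_top.mpr hsurj] at h1
  rw [finrank_top k _] at h1
  omega

set_option maxHeartbeats 1000000 in
lemma Hd_le_key (J : Ideal (MvPolynomial (Fin n) k)) (g : MvPolynomial (Fin n) k)
    (hg : g ∈ mIdeal k n ^ 2) (t : ℕ) :
    Hd k n J t ≤ Hd k n (J ⊔ Ideal.span {g}) t + Hd k n J (t - 2) := by
  classical
  set U : Ideal (MvPolynomial (Fin n) k) := J ⊔ mIdeal k n ^ t with hU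
  set V : Ideal (MvPolynomial (Fin n) k) := (J ⊔ Ideal.span {g}) ⊔ mIdeal k n ^ t with hV
  set W : Ideal (MvPolynomial (Fin n) k) := J ⊔ mIdeal k n ^ (t - 2) with hW
  haveI : Module.Finite k (MvPolynomial (Fin n) k ⧸ U) := quot_finite U le_sup_right
  haveI : Module.Finite k (MvPolynomial (Fin n) k ⧸ W) := quot_finite W le_sup_right
  have hUV : U ≤ V := sup_le_sup_right le_sup_left _
  -- the factor map
  let π : (MvPolynomial (Fin n) k ⧸ U) →ₗ[k] (MvPolynomial (Fin n) k ⧸ V) :=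
    LinearMap.restrictScalars k (Submodule.mapQ U V LinearMap.id hUV)
  have hsurj : Function.Surjective π := by
    intro y
    obtain ⟨p, rfl⟩ := Ideal.Quotient.mk_surjective y
    exact ⟨Ideal.Quotient.mk U p, rfl⟩
  -- multiplication by g
  let φ₀ : MvPolynomial (Fin n) k →ₗ[MvPolynomial (Fin n) k] (MvPolynomial (Fin n) k ⧸ U) := U.mkQ.comp (LinearMap.toSpanSingleton (MvPolynomial (Fin n) k) (MvPolynomial (Fin n) k) g)
  have hker : W ≤ LinearMap.ker φ₀ := by
    intro w hw
    rw [LinearMap.mem_ker]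
    have : w • g ∈ U := by
      rw [smul_eq_mul]
      obtain ⟨a, ha, b, hb, rfl⟩ := Submodule.mem_sup.mp hw
      rw [add_mul]
      apply Submodule.add_mem
      · exact Submodule.mem_sup_left (Ideal.mul_mem_right g J ha)
      · apply Submodule.mem_sup_right
        have h1 : b * g ∈ mIdeal k n ^ (t - 2) * mIdeal k n ^ 2 := Ideal.mul_mem_mul hb hg
        rw [← pow_add] at h1
        exact Ideal.pow_le_pow_right (by omega) h1
    show U.mkQ (w • g) = 0
    rw [Submodule.mkQ_apply, Submodule.Quotient.mk_eq_zero]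
    exact this
  let φ : (MvPolynomial (Fin n) k ⧸ W) →ₗ[k] (MvPolynomial (Fin n) k ⧸ U) :=
    LinearMap.restrictScalars k (Submodule.liftQ W φ₀ hker)
  -- kernel of π is contained in the range of φ
  have hkerrange : LinearMap.ker π ≤ LinearMap.range φ := by
    intro x hx
    obtain ⟨p, rfl⟩ := Ideal.Quotient.mk_surjective x
    have hp : p ∈ V := by
      have h0 : π (Ideal.Quotient.mk U p) = (Submodule.Quotient.mk p : _ ⧸ V) := rfl
      have h1 : (Submodule.Quotient.mk p : _ ⧸ V) = 0 := by
        rw [← h0]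
        exact LinearMap.mem_ker.mp hx
      rwa [Submodule.Quotient.mk_eq_zero] at h1
    obtain ⟨ac, hac, b, hb, rfl⟩ := Submodule.mem_sup.mp hp
    obtain ⟨a, ha, c, hc, rfl⟩ := Submodule.mem_sup.mp hac
    obtain ⟨q, rfl⟩ := Ideal.mem_span_singleton'.mp hc
    refine ⟨Submodule.Quotient.mk q, ?_⟩
    have h5 : φ (Submodule.Quotient.mk q) = (Submodule.Quotient.mk (q • g) : _ ⧸ U) := rfl
    have h6 : (Ideal.Quotient.mk U) (a + q * g + b) = (Submodule.Quotient.mk (a + q * g + b) : _ ⧸ U) := rfl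
    rw [h5, h6, Submodule.Quotient.eq]
    have : q • g - (a + q * g + b) = -(a + b) := by rw [smul_eq_mul]; ring
    rw [this]
    exact Submodule.neg_mem _ (Submodule.add_mem _ (Submodule.mem_sup_left ha)
      (Submodule.mem_sup_right hb))
  -- count
  have h1 := LinearMap.finrank_range_add_finrank_ker π
  rw [LinearMap.range_eq_top.mpr hsurj, finrank_top k _] at h1
  have h2 : finrank k (LinearMap.ker π) ≤ finrank k (LinearMap.range φ) :=
    Submodule.finrank_mono hkerrange
  have h3 := LinearMap.finrank_range_add_finrank_ker φ
  have h4 : finrank k (LinearMap.range φ) ≤ finrank k (MvPolynomial (Fin n) k ⧸ W) := by omega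
  have hHd : Hd k n J t = finrank k (MvPolynomial (Fin n) k ⧸ U) := rfl
  have hHd2 : Hd k n (J ⊔ Ideal.span {g}) t = finrank k (MvPolynomial (Fin n) k ⧸ V) := rfl
  have hHd3 : Hd k n J (t - 2) = finrank k (MvPolynomial (Fin n) k ⧸ W) := rfl
  omega

lemma Hd_zero (J : Ideal (MvPolynomial (Fin n) k)) : Hd k n J 0 = 0 := by
  have htop : J ⊔ mIdeal k n ^ 0 = ⊤ := by
    rw [pow_zero, Ideal.one_eq_top, sup_top_eq]
  unfold Hd
  rw [htop]
  have h10 : (1 : MvPolynomial (Fin n) k ⧸ (⊤ : Ideal (MvPolynomial (Fin n) k))) = 0 := by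
    rw [← map_one (Ideal.Quotient.mk ⊤), Ideal.Quotient.eq_zero_iff_mem]
    trivial
  haveI : Subsingleton (MvPolynomial (Fin n) k ⧸ (⊤ : Ideal (MvPolynomial (Fin n) k))) :=
    subsingleton_of_zero_eq_one h10.symm
  exact Module.finrank_zero_of_subsingleton

lemma Hd_telescope (J : Ideal (MvPolynomial (Fin n) k)) (g : MvPolynomial (Fin n) k)
    (hg : g ∈ mIdeal k n ^ 2) : ∀ t : ℕ,
    Hd k n J t ≤ ∑ i ∈ Finset.range t, Hd k n (J ⊔ Ideal.span {g}) (t - 2 * i) := by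
  intro t
  induction t using Nat.strong_induction_on with
  | _ t ih =>
    match t with
    | 0 => simp [Hd_zero]
    | (u+1) =>
      have key := Hd_le_key J g hg (u+1)
      have ih2 := ih (u + 1 - 2) (by omega)
      have hcongr : ∑ i ∈ Finset.range (u+1-2), Hd k n (J ⊔ Ideal.span {g}) (u+1-2 - 2*i)
          = ∑ i ∈ Finset.range (u+1-2), Hd k n (J ⊔ Ideal.span {g}) (u+1 - 2*(i+1)) := by
        refine Finset.sum_congr rfl fun i _ => ?_
        congr 1
        omega
      rw [hcongr] at ih2
      have hsplit : ∑ i ∈ Finset.range (u+1), Hd k n (J ⊔ Ideal.span {g}) (u+1 - 2*i)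
          = (∑ i ∈ Finset.range u, Hd k n (J ⊔ Ideal.span {g}) (u+1 - 2*(i+1)))
            + Hd k n (J ⊔ Ideal.span {g}) (u+1) := by
        have := Finset.sum_range_succ' (fun i => Hd k n (J ⊔ Ideal.span {g}) (u+1 - 2*i)) u
        simpa using this
      have hsub : ∑ i ∈ Finset.range (u+1-2), Hd k n (J ⊔ Ideal.span {g}) (u+1 - 2*(i+1))
          ≤ ∑ i ∈ Finset.range u, Hd k n (J ⊔ Ideal.span {g}) (u+1 - 2*(i+1)) :=
        Finset.sum_le_sum_of_subset (Finset.range_subset_range.mpr (by omega))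
      omega

/-- dimension-count function for the chain argument -/
def cFun : ℕ → ℕ → ℕ
  | 0, t => if t = 0 then 0 else 1
  | (j+1), t => ∑ i ∈ Finset.range t, cFun j (t - 2 * i)

lemma cFun_zero_right : ∀ j, cFun j 0 = 0
  | 0 => rfl
  | (j+1) => by simp [cFun]

lemma Hd_fold (L : ℕ) : ∀ (j : ℕ) (J : Ideal (MvPolynomial (Fin n) k))
    (G : Fin j → MvPolynomial (Fin n) k), (∀ i, G i ∈ mIdeal k n ^ 2) →
    (∀ t, Hd k n (J ⊔ Ideal.span (Set.range G)) t ≤ L * cFun 0 t) →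
    ∀ t, Hd k n J t ≤ L * cFun j t := by
  intro j
  induction j with
  | zero =>
    intro J G _ hbase t
    have : J ⊔ Ideal.span (Set.range G) = J := by
      have : Set.range G = ∅ := Set.range_eq_empty G
      rw [this, Ideal.span_empty, sup_bot_eq]
    simpa [this] using hbase t
  | succ j ih =>
    intro J G hG hbase t
    have hsplit : Ideal.span (Set.range G) = Ideal.span {G 0} ⊔ Ideal.span (Set.range (G ∘ Fin.succ)) := by
      rw [Fin.range_fin_succ, Set.insert_eq, Ideal.span_union]
      rfl
    have hIH : ∀ t, Hd k n (J ⊔ Ideal.span {G 0}) t ≤ L * cFun j t := by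
      apply ih (J ⊔ Ideal.span {G 0}) (G ∘ Fin.succ) (fun i => hG _)
      intro t'
      have : J ⊔ Ideal.span {G 0} ⊔ Ideal.span (Set.range (G ∘ Fin.succ))
          = J ⊔ Ideal.span (Set.range G) := by
        rw [hsplit, sup_assoc]
      rw [this]
      exact hbase t'
    calc Hd k n J t ≤ ∑ i ∈ Finset.range t, Hd k n (J ⊔ Ideal.span {G 0}) (t - 2 * i) :=
          Hd_telescope J (G 0) (hG 0) t
      _ ≤ ∑ i ∈ Finset.range t, L * cFun j (t - 2 * i) :=
          Finset.sum_le_sum fun i _ => hIH _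
      _ = L * cFun (j+1) t := by rw [cFun, Finset.mul_sum]

/-- simplex count function -/
def DFun : ℕ → ℕ → ℕ
  | 0, t => if t = 0 then 0 else 1
  | (j+1), t => ∑ i ∈ Finset.range t, DFun j (t - i)

lemma DFun_zero_right : ∀ j, DFun j 0 = 0
  | 0 => rfl
  | (j+1) => by simp [DFun]

lemma cFun_two_mul (j s : ℕ) : cFun j (2 * s) = DFun j s := by
  induction j generalizing s with
  | zero =>
    rcases Nat.eq_zero_or_pos s with rfl | hs
    · simp [cFun, DFun]
    · simp only [cFun, DFun]
      rw [if_neg (by omega), if_neg (by omega)]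
  | succ j ih =>
    show (∑ i ∈ Finset.range (2*s), cFun j (2*s - 2*i)) = ∑ i ∈ Finset.range s, DFun j (s - i)
    have h1 : ∀ i : ℕ, cFun j (2*s - 2*i) = DFun j (s - i) := by
      intro i
      have : 2*s - 2*i = 2*(s - i) := by omega
      rw [this, ih]
    simp only [h1]
    have h2 : ∑ i ∈ Finset.Ico s (2*s), DFun j (s - i) = 0 := by
      apply Finset.sum_eq_zero
      intro i hi
      have : s - i = 0 := by
        have := (Finset.mem_Ico.mp hi).1
        omega
      rw [this, DFun_zero_right]
    rw [← Finset.sum_range_add_sum_Ico (fun i => DFun j (s - i)) (show s ≤ 2*s by omega), h2,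
      add_zero]

lemma DFun_eq_choose (j : ℕ) : ∀ t : ℕ, 0 < t → DFun j t = (t - 1 + j).choose j := by
  induction j with
  | zero => intro t ht; simp [DFun, Nat.pos_iff_ne_zero.mp ht]
  | succ j ih =>
    intro t ht
    show (∑ i ∈ Finset.range t, DFun j (t - i)) = (t - 1 + (j+1)).choose (j+1)
    have h1 : ∀ i ∈ Finset.range t, DFun j (t - i) = (t - i - 1 + j).choose j := by
      intro i hi
      exact ih (t - i) (by have := Finset.mem_range.mp hi; omega)
    rw [Finset.sum_congr rfl h1]
    have h2 := Finset.sum_range_reflect (fun i => (i + j).choose j) t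
    have h3 : ∀ i ∈ Finset.range t, (t - i - 1 + j).choose j = (t - 1 - i + j).choose j := by
      intro i hi
      congr 2
      have := Finset.mem_range.mp hi
      omega
    rw [Finset.sum_congr rfl h3, h2]
    obtain ⟨u, rfl⟩ : ∃ u, t = u + 1 := ⟨t - 1, by omega⟩
    rw [Nat.sum_range_add_choose u j]
    have : u + 1 - 1 + (j+1) = u + j + 1 := by omega
    rw [this]

lemma card_MSg : ∀ (m t : ℕ), (MSg m t).card = DFun m t := by
  intro m
  induction m with
  | zero =>
    intro t
    rcases Nat.eq_zero_or_pos t with rfl | ht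
    · rw [show DFun 0 0 = 0 from rfl]
      rw [Finset.card_eq_zero, MSg]
      apply Finset.filter_false_of_mem
      intro v _
      simp
    · have : MSg 0 t = Fintype.piFinset fun _ : Fin 0 => Finset.range t := by
        rw [MSg]
        apply Finset.filter_true_of_mem
        intro v _
        simpa using ht
      rw [this, Fintype.card_piFinset]
      simp [DFun, Nat.pos_iff_ne_zero.mp ht]
  | succ m ih =>
    intro t
    classical
    have hdecomp : MSg (m+1) t
        = (Finset.range t).biUnion
          (fun a => (MSg m (t - a)).image (fun w => (Fin.cons a w : Fin (m+1) → ℕ))) := by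
      ext v
      simp only [Finset.mem_biUnion, Finset.mem_range, Finset.mem_image]
      constructor
      · intro hv
        have hsum := mem_MSg.mp hv
        rw [Fin.sum_univ_succ] at hsum
        refine ⟨v 0, by omega, Fin.tail v, mem_MSg.mpr ?_, Fin.cons_self_tail v⟩
        have htail : (∑ i : Fin m, Fin.tail v i) = ∑ i : Fin m, v i.succ := rfl
        rw [htail]
        omega
      · rintro ⟨a, ha, w, hw, rfl⟩
        have hsum := mem_MSg.mp hw
        apply mem_MSg.mpr
        rw [Fin.sum_univ_succ]
        simp only [Fin.cons_zero, Fin.cons_succ]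
        omega
    rw [hdecomp, Finset.card_biUnion]
    · have : ∀ a ∈ Finset.range t,
          ((MSg m (t - a)).image (fun w => (Fin.cons a w : Fin (m+1) → ℕ))).card
          = DFun m (t - a) := by
        intro a _
        rw [Finset.card_image_of_injective _ (Fin.cons_right_injective (α := fun _ => ℕ) a), ih]
      rw [Finset.sum_congr rfl this]
      simp [DFun]
    · intro a _ b _ hab
      apply Finset.disjoint_left.mpr
      rintro v hva hvb
      obtain ⟨w, _, rfl⟩ := Finset.mem_image.mp hva
      obtain ⟨w', _, heq⟩ := Finset.mem_image.mp hvb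
      apply hab
      have := congrArg (fun u => u 0) heq
      simpa using this.symm

lemma DFun_le_Hd_bot (t : ℕ) : DFun n t ≤ Hd k n (⊥ : Ideal (MvPolynomial (Fin n) k)) t := by
  classical
  have hsup : (⊥ : Ideal (MvPolynomial (Fin n) k)) ⊔ mIdeal k n ^ t = mIdeal k n ^ t :=
    bot_sup_eq _
  haveI : Module.Finite k (MvPolynomial (Fin n) k ⧸ ((⊥ : Ideal (MvPolynomial (Fin n) k)) ⊔ mIdeal k n ^ t)) := by
    rw [hsup]
    exact quot_finite _ le_rfl
  set I : Ideal (MvPolynomial (Fin n) k) := (⊥ : Ideal (MvPolynomial (Fin n) k)) ⊔ mIdeal k n ^ t with hI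
  -- linear independence of low monomials in the quotient
  have hli : LinearIndependent k (fun v : {x // x ∈ MSg n t} =>
      Ideal.Quotient.mk I (monomial (Finsupp.equivFunOnFinite.symm v.1) (1:k))) := by
    rw [linearIndependent_iff']
    intro s g hsum v hv
    set q : MvPolynomial (Fin n) k :=
      ∑ w ∈ s, g w • monomial (Finsupp.equivFunOnFinite.symm w.1) (1:k) with hq
    have hqmem : q ∈ mIdeal k n ^ t := by
      have : Ideal.Quotient.mk I q = 0 := by
        rw [hq, ← Ideal.Quotient.mkₐ_eq_mk k I, map_sum]
        simp only [map_smul]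
        rw [Ideal.Quotient.mkₐ_eq_mk k I]
        exact hsum
      rw [Ideal.Quotient.eq_zero_iff_mem, hI, bot_sup_eq] at this
      exact this
    have hcoeff : coeff (Finsupp.equivFunOnFinite.symm v.1) q = g v := by
      rw [hq]
      rw [← lcoeff_apply, map_sum]
      rw [Finset.sum_eq_single v]
      · simp [lcoeff_apply, MvPolynomial.coeff_monomial]
      · intro w _ hwv
        simp only [lcoeff_apply, MvPolynomial.smul_monomial, smul_eq_mul, mul_one,
          MvPolynomial.coeff_monomial]
        rw [if_neg, ]
        intro hEq
        apply hwv
        have := Finsupp.equivFunOnFinite.symm.injective hEq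
        exact Subtype.ext this
      · intro hvs
        exact absurd hv hvs
    have hdeg : deg (Finsupp.equivFunOnFinite.symm v.1) < t := by
      have hv2 := mem_MSg.mp v.2
      have : deg (Finsupp.equivFunOnFinite.symm v.1) = ∑ i, v.1 i := by
        unfold deg
        apply Finset.sum_congr rfl
        intro i _
        rfl
      omega
    rw [← hcoeff]
    exact coeff_eq_zero_of_mem_pow hqmem hdeg
  have hcard := hli.fintype_card_le_finrank
  rw [Fintype.card_coe, card_MSg] at hcard
  exact hcard

lemma pow_add_le (s n' : ℕ) (hs : 1 ≤ s) : (s + n') ^ n' ≤ s ^ n' + (n' + 1) ^ n' * s ^ (n' - 1) := by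
  rcases Nat.eq_zero_or_pos n' with rfl | hn
  · simp
  rw [add_pow]
  simp only [Nat.cast_id]
  rw [Finset.sum_range_succ]
  have hlast : s ^ n' * n' ^ (n' - n') * n'.choose n' = s ^ n' := by
    simp
  rw [hlast]
  have h1 : ∑ j ∈ Finset.range n', s ^ j * n' ^ (n' - j) * n'.choose j
      ≤ s ^ (n'-1) * ∑ j ∈ Finset.range n', (n' ^ (n' - j) * n'.choose j) := by
    rw [Finset.mul_sum]
    apply Finset.sum_le_sum
    intro j hj
    have hjl := Finset.mem_range.mp hj
    have hsj : s ^ j ≤ s ^ (n'-1) := Nat.pow_le_pow_right hs (by omega)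
    calc s ^ j * n' ^ (n' - j) * n'.choose j ≤ s ^ (n'-1) * n' ^ (n' - j) * n'.choose j :=
          Nat.mul_le_mul_right _ (Nat.mul_le_mul_right _ hsj)
      _ = s ^ (n'-1) * (n' ^ (n' - j) * n'.choose j) := by ring
  have h2 : ∑ j ∈ Finset.range n', (n' ^ (n' - j) * n'.choose j) ≤ (n' + 1) ^ n' := by
    have hb : (1 + n') ^ n' = ∑ j ∈ Finset.range (n'+1), 1 ^ j * n' ^ (n' - j) * n'.choose j := by
      have hb0 := add_pow 1 n' n'
      simpa only [Nat.cast_id] using hb0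
    have hc : ∑ j ∈ Finset.range n', (n' ^ (n' - j) * n'.choose j)
        ≤ ∑ j ∈ Finset.range (n'+1), 1 ^ j * n' ^ (n' - j) * n'.choose j := by
      rw [Finset.sum_range_succ]
      simp only [one_pow, one_mul]
      exact Nat.le_add_right _ _
    rw [← hb, Nat.add_comm 1 n'] at hc
    exact hc
  have h3 : s ^ (n'-1) * ∑ j ∈ Finset.range n', (n' ^ (n' - j) * n'.choose j)
      ≤ s ^ (n'-1) * (n' + 1) ^ n' := Nat.mul_le_mul_left _ h2
  have h4 : s ^ (n'-1) * (n' + 1) ^ n' = (n' + 1) ^ n' * s ^ (n'-1) := Nat.mul_comm _ _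
  omega

lemma numeric_key (n' : ℕ) (hn : 0 < n') :
    ∃ s : ℕ, 0 < s ∧ (2 ^ n' - 1) * DFun n' s < DFun n' (2 * s) := by
  set s : ℕ := (2 ^ n' - 1) * (n' + 1) ^ n' + 1 with hs
  have hs1 : 1 ≤ s := by omega
  refine ⟨s, by omega, ?_⟩
  rw [DFun_eq_choose n' s (by omega), DFun_eq_choose n' (2*s) (by omega)]
  apply Nat.lt_of_mul_lt_mul_left (a := n'.factorial)
  have hasc1 : n'.factorial * (s - 1 + n').choose n' = s.ascFactorial n' := by
    have he : s - 1 + n' = s + n' - 1 := by omega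
    rw [he, Nat.ascFactorial_eq_factorial_mul_choose']
  have hasc2 : n'.factorial * (2*s - 1 + n').choose n' = (2*s).ascFactorial n' := by
    have he : 2*s - 1 + n' = 2*s + n' - 1 := by omega
    rw [he, Nat.ascFactorial_eq_factorial_mul_choose']
  have hb1 : s.ascFactorial n' ≤ (s - 1 + n') ^ n' := by
    have h := Nat.ascFactorial_le_pow_add (s-1) n'
    have hsub : s - 1 + 1 = s := by omega
    rwa [hsub] at h
  have hb2 : (2*s) ^ n' ≤ (2*s).ascFactorial n' := Nat.pow_succ_le_ascFactorial (2*s) n'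
  have hkey : (2 ^ n' - 1) * (s - 1 + n') ^ n' < (2*s) ^ n' := by
    have hle : (s - 1 + n') ^ n' ≤ (s + n') ^ n' := Nat.pow_le_pow_left (by omega) n'
    have hpa := pow_add_le s n' hs1
    have hspos : 0 < s ^ (n'-1) := Nat.pow_pos (by omega)
    have hlt : (2 ^ n' - 1) * (n' + 1) ^ n' * s ^ (n'-1) < s * s ^ (n'-1) :=
      Nat.mul_lt_mul_of_lt_of_le (by omega) le_rfl hspos
    have hss : s * s ^ (n'-1) = s ^ n' := by
      rw [← pow_succ']
      congr 1
      omega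
    have hfin : (2 ^ n' - 1) * s ^ n' + s ^ n' = 2 ^ n' * s ^ n' := by
      rw [Nat.sub_mul, one_mul]
      have hx : s ^ n' ≤ 2 ^ n' * s ^ n' :=
        Nat.le_mul_of_pos_left _ (Nat.pow_pos (by omega))
      omega
    calc (2 ^ n' - 1) * (s - 1 + n') ^ n' ≤ (2 ^ n' - 1) * (s + n') ^ n' :=
          Nat.mul_le_mul_left _ hle
      _ ≤ (2 ^ n' - 1) * (s ^ n' + (n' + 1) ^ n' * s ^ (n'-1)) := Nat.mul_le_mul_left _ hpa
      _ = (2 ^ n' - 1) * s ^ n' + (2 ^ n' - 1) * (n' + 1) ^ n' * s ^ (n'-1) := by ring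
      _ < (2 ^ n' - 1) * s ^ n' + s ^ n' := by omega
      _ = 2 ^ n' * s ^ n' := hfin
      _ = (2*s) ^ n' := by rw [mul_pow]
  calc n'.factorial * ((2 ^ n' - 1) * (s - 1 + n').choose n')
      = (2 ^ n' - 1) * (n'.factorial * (s - 1 + n').choose n') := by ring
    _ = (2 ^ n' - 1) * s.ascFactorial n' := by rw [hasc1]
    _ ≤ (2 ^ n' - 1) * (s - 1 + n') ^ n' := Nat.mul_le_mul_left _ hb1
    _ < (2*s) ^ n' := hkey
    _ ≤ (2*s).ascFactorial n' := hb2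
    _ = n'.factorial * (2*s - 1 + n').choose n' := hasc2.symm

set_option maxHeartbeats 2000000 in
set_option synthInstance.maxHeartbeats 200000 in
lemma transfer (f : Fin n → MvPolynomial (Fin n) k)
    (hfd : FiniteDimensional k (Q0 k f)) (t : ℕ) :
    Hd k n (Ideal.span (Set.range f)) t ≤ finrank k (Q0 k f) := by
  classical
  set Jt : Ideal (MvPolynomial (Fin n) k) := Ideal.span (Set.range f) ⊔ mIdeal k n ^ t with hJt
  have hunit : ∀ s : S k n, IsUnit (Ideal.Quotient.mk Jt (s : MvPolynomial (Fin n) k)) := by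
    rintro ⟨s, hs⟩
    have hc : constantCoeff s ≠ 0 := hs
    have hmem : s - C (constantCoeff s) ∈ mIdeal k n := by
      apply mem_m_of_constantCoeff_eq_zero
      simp
    have hnil : IsNilpotent (Ideal.Quotient.mk Jt (s - C (constantCoeff s))) := by
      refine ⟨t, ?_⟩
      rw [← map_pow, Ideal.Quotient.eq_zero_iff_mem]
      exact Submodule.mem_sup_right (Ideal.pow_mem_pow hmem t)
    have hu : IsUnit (Ideal.Quotient.mk Jt (C (constantCoeff s))) :=
      (isUnit_iff_ne_zero.mpr hc).map ((Ideal.Quotient.mk Jt).comp (C : k →+* _))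
    have hsplit : Ideal.Quotient.mk Jt s
        = Ideal.Quotient.mk Jt (C (constantCoeff s)) + Ideal.Quotient.mk Jt (s - C (constantCoeff s)) := by
      rw [← (Ideal.Quotient.mk Jt).map_add]
      congr 1
      ring
    have hadd := hnil.isUnit_add_right_of_commute hu (Commute.all _ _)
    show IsUnit (Ideal.Quotient.mk Jt s)
    rw [hsplit, add_comm]
    exact hadd
  let g : MvPolynomial (Fin n) k →+* (MvPolynomial (Fin n) k ⧸ Jt) := Ideal.Quotient.mk Jt
  have hu' : ∀ s : S k n, IsUnit (g s) := hunit
  let ℓ : Loc k n →+* (MvPolynomial (Fin n) k ⧸ Jt) := IsLocalization.lift hu'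
  have hker : ∀ a ∈ idealOf k f, ℓ a = 0 := by
    intro a ha
    have hle : idealOf k f ≤ RingHom.ker ℓ := by
      rw [idealOf, Ideal.span_le]
      rintro _ ⟨i, rfl⟩
      rw [SetLike.mem_coe, RingHom.mem_ker]
      have h1 : ℓ (algebraMap _ (Loc k n) (f i)) = g (f i) := IsLocalization.lift_eq hu' (f i)
      rw [h1]
      show Ideal.Quotient.mk Jt (f i) = 0
      rw [Ideal.Quotient.eq_zero_iff_mem]
      exact Submodule.mem_sup_left (Ideal.subset_span ⟨i, rfl⟩)
    exact RingHom.mem_ker.mp (hle ha)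
  let Φ : Q0 k f →+* (MvPolynomial (Fin n) k ⧸ Jt) :=
    Ideal.Quotient.lift (idealOf k f) ℓ hker
  have hΦsurj : Function.Surjective Φ := by
    intro y
    obtain ⟨p, rfl⟩ := Ideal.Quotient.mk_surjective y
    refine ⟨Ideal.Quotient.mk (idealOf k f) (algebraMap _ (Loc k n) p), ?_⟩
    show ℓ (algebraMap _ _ p) = Ideal.Quotient.mk Jt p
    exact IsLocalization.lift_eq hu' p
  have hcomm : ∀ r : k, Φ ((algebraMap k (Q0 k f) : k →+* Q0 k f) r)
      = algebraMap k (MvPolynomial (Fin n) k ⧸ Jt) r := by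
    intro r
    have h1 : (algebraMap k (Q0 k f) : k →+* Q0 k f) r
        = Ideal.Quotient.mk (idealOf k f) (algebraMap k (Loc k n) r) := by
      rw [IsScalarTower.algebraMap_apply k (Loc k n) (Q0 k f), Ideal.Quotient.algebraMap_eq]
    have h2 : algebraMap k (Loc k n) r
        = algebraMap (MvPolynomial (Fin n) k) (Loc k n) (algebraMap k _ r) :=
      IsScalarTower.algebraMap_apply k (MvPolynomial (Fin n) k) (Loc k n) r
    rw [h1, h2]
    have h3 : Φ (Ideal.Quotient.mk (idealOf k f)
        (algebraMap (MvPolynomial (Fin n) k) (Loc k n) (algebraMap k _ r)))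
        = ℓ (algebraMap (MvPolynomial (Fin n) k) (Loc k n) (algebraMap k _ r)) := rfl
    rw [h3, IsLocalization.lift_eq hu']
    show Ideal.Quotient.mk Jt (algebraMap k _ r) = _
    rw [IsScalarTower.algebraMap_apply k (MvPolynomial (Fin n) k)
      (MvPolynomial (Fin n) k ⧸ Jt), Ideal.Quotient.algebraMap_eq]
  let Φₐ : Q0 k f →ₐ[k] (MvPolynomial (Fin n) k ⧸ Jt) := { Φ with commutes' := hcomm }
  haveI := hfd
  have h1 := LinearMap.finrank_range_add_finrank_ker (Φₐ.toLinearMap)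
  have hrange : LinearMap.range Φₐ.toLinearMap = ⊤ := LinearMap.range_eq_top.mpr hΦsurj
  rw [hrange, finrank_top] at h1
  have hHd : Hd k n (Ideal.span (Set.range f)) t
      = finrank k (MvPolynomial (Fin n) k ⧸ Jt) := rfl
  omega

end Aux

theorem stmt11 (hchar : ringChar k ≠ 2) (n : ℕ) (f : Fin n → MvPolynomial (Fin n) k)
    (hf0 : ∀ i, constantCoeff (f i) = 0)
    (hfd : FiniteDimensional k (Q0 k f))
    (hsub : Ideal.span (Set.range f) ≤ mIdeal k n ^ 2) :
    2 ^ n ≤ Module.finrank k (Q0 k f) := by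
  classical
  set L := Module.finrank k (Q0 k f) with hL
  have hG : ∀ i, f i ∈ mIdeal k n ^ 2 := fun i => hsub (Ideal.subset_span ⟨i, rfl⟩)
  have hbase : ∀ t, Aux.Hd k n ((⊥ : Ideal (MvPolynomial (Fin n) k))
      ⊔ Ideal.span (Set.range f)) t ≤ L * Aux.cFun 0 t := by
    intro t
    match t with
    | 0 =>
      rw [Aux.Hd_zero]
      exact Nat.zero_le _
    | (u+1) =>
      rw [bot_sup_eq]
      have h := Aux.transfer f hfd (u+1)
      have hc : Aux.cFun 0 (u+1) = 1 := by simp [Aux.cFun]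
      rw [hc, mul_one]
      exact h
  have hchain := Aux.Hd_fold L n ⊥ f hG hbase
  rcases Nat.eq_zero_or_pos n with rfl | hn
  · have h1 : Aux.DFun 0 1 ≤ Aux.Hd k 0 (⊥ : Ideal (MvPolynomial (Fin 0) k)) 1 :=
      Aux.DFun_le_Hd_bot 1
    have h2 := hchain 1
    have h3 : Aux.cFun 0 1 = 1 := by simp [Aux.cFun]
    have h4 : Aux.DFun 0 1 = 1 := by simp [Aux.DFun]
    rw [h3, mul_one] at h2
    rw [h4] at h1
    simpa using le_trans h1 h2
  · obtain ⟨s, hs, hnum⟩ := Aux.numeric_key n hn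
    have hA : Aux.DFun n (2*s) ≤ Aux.Hd k n (⊥ : Ideal (MvPolynomial (Fin n) k)) (2*s) :=
      Aux.DFun_le_Hd_bot (2*s)
    have hB := hchain (2*s)
    rw [Aux.cFun_two_mul] at hB
    have hlt : (2^n - 1) * Aux.DFun n s < L * Aux.DFun n s :=
      lt_of_lt_of_le hnum (le_trans hA hB)
    have hfinal : 2^n - 1 < L := by
      by_contra hcon
      push_neg at hcon
      have := Nat.mul_le_mul_right (Aux.DFun n s) hcon
      omega
    have h2p : 1 ≤ 2^n := Nat.one_le_two_pow
    omega

end EKL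
end

section
/- Let k be a field with char(k) ≠ 2 and let f = (f₁,f₂) : 𝔸² → 𝔸² be a polynomial map with an isolated zero at 0 such that the ideal (f₁,f₂) is contained in 𝔪² = (x,y)² and dim_k Q₀(f) = 5. Then there exist elements h₁, h₂ ∈ Q₀(f) that are linearly independent over k and satisfy h₁² = h₂² = h₁h₂ = 0 in Q₀(f). -/
open MvPolynomial Module

namespace EKL

variable (k : Type) [Field k]

variable {k}

lemma X_mem_mIdeal (i : Fin 2) : (X i : MvPolynomial (Fin 2) k) ∈ mIdeal k 2 :=
  Ideal.subset_span ⟨i, rfl⟩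

lemma sub_C_mem (p : MvPolynomial (Fin 2) k) :
    p - C (constantCoeff p) ∈ mIdeal k 2 := by
  induction p using MvPolynomial.induction_on with
  | C a => simp
  | add p q hp hq =>
      have h : p + q - C (constantCoeff (p + q))
          = (p - C (constantCoeff p)) + (q - C (constantCoeff q)) := by
        rw [map_add, C_add]; ring
      rw [h]; exact add_mem hp hq
  | mul_X p j hp =>
      have h0 : constantCoeff (p * X j) = 0 := by simp [map_mul]
      rw [h0, map_zero, sub_zero]
      exact Ideal.mul_mem_left _ p (X_mem_mIdeal j)

lemma mem_mIdeal_iff {p : MvPolynomial (Fin 2) k} :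
    p ∈ mIdeal k 2 ↔ constantCoeff p = 0 := by
  constructor
  · intro hp
    have hle : mIdeal k 2 ≤ RingHom.ker (constantCoeff : MvPolynomial (Fin 2) k →+* k) := by
      rw [mIdeal, Ideal.span_le]
      rintro _ ⟨i, rfl⟩
      simp [RingHom.mem_ker]
    simpa [RingHom.mem_ker] using hle hp
  · intro hp
    have h := sub_C_mem p
    rw [hp, map_zero, sub_zero] at h
    exact h

lemma e1_prod (i : Fin 2) {a b : MvPolynomial (Fin 2) k}
    (ha : constantCoeff a = 0) (hb : constantCoeff b = 0) :
    constantCoeff (pderiv i (a * b)) = 0 := by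
  rw [pderiv_mul, map_add, map_mul, map_mul, ha, hb]
  ring

lemma vanish_of_mem_sq {r : MvPolynomial (Fin 2) k} (hr : r ∈ mIdeal k 2 ^ 2) :
    constantCoeff r = 0 ∧ ∀ i, constantCoeff (pderiv i r) = 0 := by
  rw [pow_two] at hr
  refine Submodule.mul_induction_on hr ?_ ?_
  · intro a ha b hb
    have ha0 := mem_mIdeal_iff.mp ha
    have hb0 := mem_mIdeal_iff.mp hb
    exact ⟨by rw [map_mul, ha0, hb0, mul_zero], fun i => e1_prod i ha0 hb0⟩
  · intro x y hx hy
    refine ⟨by rw [map_add, hx.1, hy.1, add_zero], fun i => ?_⟩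
    rw [map_add, map_add, hx.2 i, hy.2 i, add_zero]

lemma sub_linear_mem_sq (p : MvPolynomial (Fin 2) k) :
    p - (C (constantCoeff p) + C (constantCoeff (pderiv 0 p)) * X 0
        + C (constantCoeff (pderiv 1 p)) * X 1) ∈ mIdeal k 2 ^ 2 := by
  induction p using MvPolynomial.induction_on with
  | C a => simp
  | add p q hp hq =>
      have h : p + q - (C (constantCoeff (p + q))
            + C (constantCoeff (pderiv 0 (p + q))) * X 0
            + C (constantCoeff (pderiv 1 (p + q))) * X 1)
          = (p - (C (constantCoeff p) + C (constantCoeff (pderiv 0 p)) * X 0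
              + C (constantCoeff (pderiv 1 p)) * X 1))
            + (q - (C (constantCoeff q) + C (constantCoeff (pderiv 0 q)) * X 0
              + C (constantCoeff (pderiv 1 q)) * X 1)) := by
        simp only [map_add, C_add]; ring
      rw [h]; exact add_mem hp hq
  | mul_X p j hp =>
      have h0 : constantCoeff (p * X j) = 0 := by simp [map_mul]
      have key : p * X j - (C (constantCoeff (p * X j))
            + C (constantCoeff (pderiv 0 (p * X j))) * X 0
            + C (constantCoeff (pderiv 1 (p * X j))) * X 1)
          = (p - C (constantCoeff p)) * X j := by
        have hj : j = 0 ∨ j = 1 := by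
          fin_cases j
          exacts [Or.inl rfl, Or.inr rfl]
        rcases hj with rfl | rfl
        · have h1 : constantCoeff (pderiv (0 : Fin 2) (p * X 0)) = constantCoeff p := by
            rw [pderiv_mul, pderiv_X_self, mul_one, map_add, map_mul, constantCoeff_X,
              mul_zero, zero_add]
          have h2 : constantCoeff (pderiv (1 : Fin 2) (p * X 0)) = 0 := by
            rw [pderiv_mul, pderiv_X_of_ne (by decide), mul_zero, add_zero, map_mul,
              constantCoeff_X, mul_zero]
          rw [h0, h1, h2]; simp only [map_zero]; ring
        · have h1 : constantCoeff (pderiv (0 : Fin 2) (p * X 1)) = 0 := by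
            rw [pderiv_mul, pderiv_X_of_ne (by decide), mul_zero, add_zero, map_mul,
              constantCoeff_X, mul_zero]
          have h2 : constantCoeff (pderiv (1 : Fin 2) (p * X 1)) = constantCoeff p := by
            rw [pderiv_mul, pderiv_X_self, mul_one, map_add, map_mul, constantCoeff_X,
              mul_zero, zero_add]
          rw [h0, h1, h2]; simp only [map_zero]; ring
      rw [key, pow_two]
      exact Ideal.mul_mem_mul (sub_C_mem p) (X_mem_mIdeal j)

lemma mem_sq_of_vanish {p : MvPolynomial (Fin 2) k} (h0 : constantCoeff p = 0)
    (h1 : ∀ i, constantCoeff (pderiv i p) = 0) : p ∈ mIdeal k 2 ^ 2 := by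
  have h := sub_linear_mem_sq p
  rw [h0, h1 0, h1 1] at h
  simpa using h

lemma sat1 {s p : MvPolynomial (Fin 2) k} (hs : constantCoeff s ≠ 0)
    (h : s * p ∈ mIdeal k 2) : p ∈ mIdeal k 2 := by
  rw [mem_mIdeal_iff, map_mul] at h
  exact mem_mIdeal_iff.mpr ((mul_eq_zero.mp h).resolve_left hs)

lemma sat2 {s p : MvPolynomial (Fin 2) k} (hs : constantCoeff s ≠ 0)
    (h : s * p ∈ mIdeal k 2 ^ 2) : p ∈ mIdeal k 2 ^ 2 := by
  obtain ⟨h0, h1⟩ := vanish_of_mem_sq h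
  rw [map_mul] at h0
  have hp0 : constantCoeff p = 0 := (mul_eq_zero.mp h0).resolve_left hs
  refine mem_sq_of_vanish hp0 fun i => ?_
  have hi := h1 i
  rw [pderiv_mul, map_add, map_mul, map_mul, hp0, mul_zero, zero_add] at hi
  exact (mul_eq_zero.mp hi).resolve_left hs

lemma contract {Q : Ideal (MvPolynomial (Fin 2) k)}
    (hQ : ∀ s p : MvPolynomial (Fin 2) k, constantCoeff s ≠ 0 → s * p ∈ Q → p ∈ Q)
    {p : MvPolynomial (Fin 2) k}
    (hp : algebraMap (MvPolynomial (Fin 2) k) (Loc k 2) p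
      ∈ Q.map (algebraMap (MvPolynomial (Fin 2) k) (Loc k 2))) : p ∈ Q := by
  obtain ⟨⟨q, s⟩, hqs⟩ := (IsLocalization.mem_map_algebraMap_iff (S k 2) (Loc k 2)).mp hp
  rw [← map_mul] at hqs
  obtain ⟨c, hc⟩ := (IsLocalization.eq_iff_exists (S k 2) (Loc k 2)).mp hqs
  have hcs : ((c : MvPolynomial (Fin 2) k) * s) * p ∈ Q := by
    rw [show ((c : MvPolynomial (Fin 2) k) * s) * p = c * (p * s) by ring, hc]
    exact Q.mul_mem_left _ q.2
  refine hQ _ p ?_ hcs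
  rw [map_mul]
  exact mul_ne_zero c.2 s.2

lemma pow_stab {R : Type} [CommRing R] {J : Ideal R} {N : ℕ} (hnil : J ^ N = ⊥) {n : ℕ}
    (h : J ^ (n + 1) = J ^ n) : J ^ n = ⊥ := by
  have key : ∀ m, J ^ (n + m) = J ^ n := by
    intro m
    induction m with
    | zero => rfl
    | succ m ih =>
        show J ^ ((n + m) + 1) = J ^ n
        rw [pow_succ, ih, ← pow_succ, h]
  rcases le_total n N with hle | hle
  · have hk := key (N - n)
    rw [Nat.add_sub_cancel' hle] at hk
    rw [← hk, hnil]
  · exact eq_bot_iff.mpr (hnil ▸ Ideal.pow_le_pow_right hle)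

noncomputable def truncMap : (Fin 3 → k) →ₗ[k] MvPolynomial (Fin 2) k where
  toFun v := C (v 0) + C (v 1) * X 0 + C (v 2) * X 1
  map_add' v w := by simp only [Pi.add_apply, C_add]; ring
  map_smul' c v := by
    simp only [Pi.smul_apply, smul_eq_mul, RingHom.id_apply, smul_eq_C_mul, C_mul]; ring

lemma finrank_P_mod_msq :
    finrank k (MvPolynomial (Fin 2) k ⧸ (mIdeal k 2 ^ 2)) = 3 := by
  let F : (Fin 3 → k) →ₗ[k] (MvPolynomial (Fin 2) k ⧸ (mIdeal k 2 ^ 2)) :=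
    (Ideal.Quotient.mkₐ k (mIdeal k 2 ^ 2)).toLinearMap.comp truncMap
  have hFapp : ∀ v, F v = Ideal.Quotient.mk (mIdeal k 2 ^ 2)
      (C (v 0) + C (v 1) * X 0 + C (v 2) * X 1) := fun v => rfl
  have hinj : Function.Injective F := by
    rw [injective_iff_map_eq_zero]
    intro v hv
    rw [hFapp, Ideal.Quotient.eq_zero_iff_mem] at hv
    obtain ⟨h0, h1⟩ := vanish_of_mem_sq hv
    have e0 : constantCoeff (C (v 0) + C (v 1) * X 0 + C (v 2) * X 1 : MvPolynomial (Fin 2) k) = v 0 := by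
      simp [map_add, map_mul]
    have e1 : constantCoeff (pderiv (0 : Fin 2)
        (C (v 0) + C (v 1) * X 0 + C (v 2) * X 1 : MvPolynomial (Fin 2) k)) = v 1 := by
      simp [pderiv_C_mul, pderiv_X_self, pderiv_X_of_ne (show (1 : Fin 2) ≠ 0 by decide),
        pderiv_X_of_ne (show (0 : Fin 2) ≠ 1 by decide)]
    have e2 : constantCoeff (pderiv (1 : Fin 2)
        (C (v 0) + C (v 1) * X 0 + C (v 2) * X 1 : MvPolynomial (Fin 2) k)) = v 2 := by
      simp [pderiv_C_mul, pderiv_X_self, pderiv_X_of_ne (show (1 : Fin 2) ≠ 0 by decide),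
        pderiv_X_of_ne (show (0 : Fin 2) ≠ 1 by decide)]
    have hv0 : v 0 = 0 := e0.symm.trans h0
    have hv1 : v 1 = 0 := e1.symm.trans (h1 0)
    have hv2 : v 2 = 0 := e2.symm.trans (h1 1)
    funext i
    fin_cases i
    exacts [hv0, hv1, hv2]
  have hsur : Function.Surjective F := by
    intro y
    obtain ⟨p, rfl⟩ := Ideal.Quotient.mk_surjective y
    refine ⟨![constantCoeff p, constantCoeff (pderiv 0 p), constantCoeff (pderiv 1 p)], ?_⟩
    rw [hFapp]
    have hmat0 : (![constantCoeff p, constantCoeff (pderiv 0 p),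
        constantCoeff (pderiv 1 p)] : Fin 3 → k) 0 = constantCoeff p := rfl
    have hmat1 : (![constantCoeff p, constantCoeff (pderiv 0 p),
        constantCoeff (pderiv 1 p)] : Fin 3 → k) 1 = constantCoeff (pderiv 0 p) := rfl
    have hmat2 : (![constantCoeff p, constantCoeff (pderiv 0 p),
        constantCoeff (pderiv 1 p)] : Fin 3 → k) 2 = constantCoeff (pderiv 1 p) := rfl
    rw [hmat0, hmat1, hmat2, Ideal.Quotient.eq]
    have h := sub_linear_mem_sq p
    have hrw : C (constantCoeff p) + C (constantCoeff (pderiv 0 p)) * X 0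
        + C (constantCoeff (pderiv 1 p)) * X 1 - p
        = -(p - (C (constantCoeff p) + C (constantCoeff (pderiv 0 p)) * X 0
            + C (constantCoeff (pderiv 1 p)) * X 1)) := by ring
    rw [hrw]
    exact neg_mem h
  have e := LinearEquiv.ofBijective F ⟨hinj, hsur⟩
  rw [← e.finrank_eq, Module.finrank_fin_fun]


set_option maxHeartbeats 2000000 in
set_option synthInstance.maxHeartbeats 400000 in
theorem stmt13 (hchar : ringChar k ≠ 2) (f : Fin 2 → MvPolynomial (Fin 2) k)
    (hfd : FiniteDimensional k (Q0 k f))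
    (hsub : Ideal.span (Set.range f) ≤ mIdeal k 2 ^ 2)
    (hdim : Module.finrank k (Q0 k f) = 5) :
    ∃ h₁ h₂ : Q0 k f, LinearIndependent k ![h₁, h₂] ∧
      h₁ * h₁ = 0 ∧ h₂ * h₂ = 0 ∧ h₁ * h₂ = 0 := by
  classical
  letI : CommRing (Q0 k f) := inferInstance
  let α := algebraMap (MvPolynomial (Fin 2) k) (Loc k 2)
  let π := Ideal.Quotient.mk (idealOf k f)
  let φ : MvPolynomial (Fin 2) k →ₐ[k] Q0 k f :=
    (Ideal.Quotient.mkₐ k (idealOf k f)).comp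
      (IsScalarTower.toAlgHom k (MvPolynomial (Fin 2) k) (Loc k 2))
  have hφ : ∀ p, φ p = π (α p) := fun _ => rfl
  have hcomp : π.comp α = φ.toRingHom := RingHom.ext fun _ => rfl
  have hI : idealOf k f ≤ (mIdeal k 2 ^ 2).map α := by
    have h1 : (Ideal.span (Set.range f)).map α = idealOf k f := by
      rw [Ideal.map_span, ← Set.range_comp]; rfl
    rw [← h1]
    exact Ideal.map_mono hsub
  have hpull : ∀ Q : Ideal (MvPolynomial (Fin 2) k), mIdeal k 2 ^ 2 ≤ Q →
      (∀ s p : MvPolynomial (Fin 2) k, constantCoeff s ≠ 0 → s * p ∈ Q → p ∈ Q) →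
      ∀ p, φ p ∈ Q.map φ.toRingHom → p ∈ Q := by
    intro Q hQle hQsat p hp
    rw [← hcomp, ← Ideal.map_map] at hp
    obtain ⟨w, hw, hww⟩ :=
      (Ideal.mem_map_iff_of_surjective π Ideal.Quotient.mk_surjective).mp hp
    have heq : π (α p) = π w := (hφ p).symm.trans hww.symm
    have hker : α p - w ∈ idealOf k f := Ideal.Quotient.eq.mp heq
    have hαp : α p ∈ Q.map α := by
      have h2 : α p = (α p - w) + w := by ring
      rw [h2]
      exact Submodule.add_mem _ ((Ideal.map_mono hQle) (hI hker)) hw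
    exact contract hQsat hαp
  have hunit : ∀ s : MvPolynomial (Fin 2) k, constantCoeff s ≠ 0 → IsUnit (φ s) := by
    intro s hs
    exact (IsLocalization.map_units (M := S k 2) (Loc k 2) ⟨s, hs⟩).map π
  have hdec : ∀ a : Q0 k f, ∃ p s : MvPolynomial (Fin 2) k,
      constantCoeff s ≠ 0 ∧ a * φ s = φ p := by
    intro a
    obtain ⟨z, rfl⟩ := Ideal.Quotient.mk_surjective (I := idealOf k f) a
    obtain ⟨⟨p, s⟩, hz⟩ := IsLocalization.mk'_surjective (S k 2) z
    refine ⟨p, s, s.2, ?_⟩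
    show π z * φ ↑s = φ p
    rw [hφ, hφ, ← map_mul, ← hz, IsLocalization.mk'_spec]
  haveI : Nontrivial (Q0 k f) :=
    Module.nontrivial_of_finrank_pos (R := k) (by rw [hdim]; norm_num)
  haveI hloc : IsLocalRing (Q0 k f) := by
    apply IsLocalRing.of_isUnit_or_isUnit_one_sub_self
    intro a
    obtain ⟨p, s, hs, hps⟩ := hdec a
    by_cases hp : constantCoeff p = 0
    · right
      have h1 : (1 - a) * φ s = φ s - φ p := by linear_combination -hps
      have hsp : IsUnit (φ (s - p)) := hunit _ (by rw [map_sub, hp, sub_zero]; exact hs)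
      rw [map_sub] at hsp
      rw [← h1] at hsp
      exact (have : IsDedekindFiniteMonoid (Q0 k f) := inferInstance; isUnit_of_mul_isUnit_left (M := Q0 k f) hsp)
    · left
      have h2 := hunit p hp
      rw [← hps] at h2
      exact (have : IsDedekindFiniteMonoid (Q0 k f) := inferInstance; isUnit_of_mul_isUnit_left (M := Q0 k f) h2)
  set J : Ideal (Q0 k f) := (mIdeal k 2).map φ.toRingHom with hJdef
  have hJne : J ≠ ⊤ := by
    intro htop
    have h1 : φ 1 ∈ J := by rw [htop]; exact Submodule.mem_top
    have h2 := hpull (mIdeal k 2) (Ideal.pow_le_self two_ne_zero)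
      (fun s p hs h => sat1 hs h) 1 h1
    rw [mem_mIdeal_iff, map_one] at h2
    exact one_ne_zero h2
  have hJjac : J ≤ Ideal.jacobson ⊥ := by
    rw [IsLocalRing.jacobson_eq_maximalIdeal ⊥ bot_ne_top]
    exact IsLocalRing.le_maximalIdeal hJne
  haveI : IsArtinianRing (Q0 k f) := IsArtinianRing.of_finite k (Q0 k f)
  obtain ⟨n, hn⟩ := IsArtinianRing.isNilpotent_jacobson_bot (R := Q0 k f)
  have hJnil : J ^ n = ⊥ := by
    have h1 : J ^ n ≤ (Ideal.jacobson ⊥) ^ n := Ideal.pow_right_mono hJjac n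
    rw [hn] at h1
    exact le_bot_iff.mp (by simpa using h1)
  set J2 : Ideal (Q0 k f) := J ^ 2 with hJ2def
  have hJ2 : (mIdeal k 2 ^ 2).map φ.toRingHom = J2 := by
    rw [hJ2def, hJdef, Ideal.map_pow]
  let ψ : MvPolynomial (Fin 2) k →ₐ[k] (Q0 k f ⧸ J2) := (Ideal.Quotient.mkₐ k J2).comp φ
  have hψ : ∀ p, ψ p = Ideal.Quotient.mk J2 (φ p) := fun _ => rfl
  have hker : RingHom.ker ψ = mIdeal k 2 ^ 2 := by
    ext p
    rw [RingHom.mem_ker]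
    constructor
    · intro hp
      have h1 : φ p ∈ J2 := by rw [hψ, Ideal.Quotient.eq_zero_iff_mem] at hp; exact hp
      rw [← hJ2] at h1
      exact hpull _ le_rfl (fun s q hs h => sat2 hs h) p h1
    · intro hp
      rw [hψ, Ideal.Quotient.eq_zero_iff_mem, ← hJ2]
      exact Ideal.mem_map_of_mem _ hp
  have hsurj : Function.Surjective ψ := by
    intro y
    obtain ⟨a, rfl⟩ := Ideal.Quotient.mk_surjective (I := J2) y
    obtain ⟨p, s, hs, hps⟩ := hdec a
    set c := constantCoeff s with hc
    set t : MvPolynomial (Fin 2) k := C c⁻¹ - C c⁻¹ * C c⁻¹ * (s - C c) with ht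
    have h1 : C c⁻¹ * C c = (1 : MvPolynomial (Fin 2) k) := by
      rw [← C_mul, inv_mul_cancel₀ hs, C_1]
    have hminv : t * s - 1 = -((C c⁻¹ * C c⁻¹) * ((s - C c) * (s - C c))) := by
      rw [ht]; linear_combination (1 - C c⁻¹ * (s - C c)) * h1
    have hm1 : s - C c ∈ mIdeal k 2 :=
      mem_mIdeal_iff.mpr (by rw [map_sub, constantCoeff_C, sub_self])
    have hts : t * s - 1 ∈ mIdeal k 2 ^ 2 := by
      rw [hminv]
      apply neg_mem
      rw [pow_two]
      exact Ideal.mul_mem_left _ _ (Ideal.mul_mem_mul hm1 hm1)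
    have hts0 : ψ (t * s) = 1 := by
      have h2 : t * s - 1 ∈ RingHom.ker ψ := hker.symm ▸ hts
      rw [RingHom.mem_ker, map_sub, map_one, sub_eq_zero] at h2
      exact h2
    have h3 : Ideal.Quotient.mk J2 a * ψ s = ψ p := by
      rw [hψ, hψ, ← map_mul, hps]
    refine ⟨p * t, ?_⟩
    calc ψ (p * t) = (Ideal.Quotient.mk J2 a * ψ s) * ψ t := by rw [map_mul, h3]
      _ = Ideal.Quotient.mk J2 a * ψ (t * s) := by
          rw [mul_assoc, ← map_mul, mul_comm s t]
      _ = Ideal.Quotient.mk J2 a := by rw [hts0, mul_one]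
  have E := (Ideal.quotientEquivAlgOfEq k hker.symm).trans
    (Ideal.quotientKerAlgEquivOfSurjective hsurj)
  have hfr3 : finrank k (Q0 k f ⧸ J2) = 3 := by
    rw [← E.toLinearEquiv.finrank_eq]
    exact finrank_P_mod_msq
  let mkl : Q0 k f →ₗ[k] (Q0 k f ⧸ J2) := (Ideal.Quotient.mkₐ k J2).toLinearMap
  have hrange : LinearMap.range mkl = ⊤ :=
    LinearMap.range_eq_top.mpr Ideal.Quotient.mk_surjective
  have hkerm : LinearMap.ker mkl = J2.restrictScalars k := by
    ext x
    simp only [LinearMap.mem_ker, Submodule.restrictScalars_mem, mkl,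
      AlgHom.toLinearMap_apply, Ideal.Quotient.mkₐ_eq_mk]
    exact Ideal.Quotient.eq_zero_iff_mem
  have hrn := LinearMap.finrank_range_add_finrank_ker mkl
  rw [hrange, hkerm, finrank_top, hfr3, hdim] at hrn
  have hN2 : finrank k (J2.restrictScalars k) = 2 := by omega
  have hb4 : J ^ 4 = ⊥ := by
    have h32 : J ^ 3 ≠ J ^ 2 := by
      intro h
      have hb2 : J ^ 2 = ⊥ := pow_stab (n := 2) hJnil (by norm_num; exact h)
      have hz : finrank k (J2.restrictScalars k) = 0 := by
        have hB : J2.restrictScalars k = ⊥ := by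
          rw [hJ2def, hb2]
          rfl
        rw [hB, finrank_bot]
      omega
    by_contra hne4
    have h43 : J ^ 4 ≠ J ^ 3 := by
      intro h
      have hb3 : J ^ 3 = ⊥ := pow_stab (n := 3) hJnil (by norm_num; exact h)
      exact hne4 (le_bot_iff.mp (hb3 ▸ Ideal.pow_le_pow_right (by norm_num)))
    have lt32 : (J ^ 3).restrictScalars k < (J ^ 2).restrictScalars k := by
      refine lt_of_le_of_ne (fun x hx => Ideal.pow_le_pow_right (by norm_num) hx) ?_
      intro h
      exact h32 (Submodule.restrictScalars_injective k _ _ h)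
    have lt43 : (J ^ 4).restrictScalars k < (J ^ 3).restrictScalars k := by
      refine lt_of_le_of_ne (fun x hx => Ideal.pow_le_pow_right (by norm_num) hx) ?_
      intro h
      exact h43 (Submodule.restrictScalars_injective k _ _ h)
    have f3 := Submodule.finrank_lt_finrank_of_lt lt32
    have f4 := Submodule.finrank_lt_finrank_of_lt lt43
    have fp : 0 < finrank k ((J ^ 4).restrictScalars k) := by
      rcases Nat.eq_zero_or_pos (finrank k ((J ^ 4).restrictScalars k)) with h0 | h
      · exfalso
        apply hne4
        exact (Submodule.restrictScalars_eq_bot_iff k _ _).mp (Submodule.finrank_eq_zero.mp h0)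
      · exact h
    have h22 : finrank k ((J ^ 2).restrictScalars k) = 2 := hN2
    omega
  have hprod : ∀ x y : Q0 k f, x ∈ J2 → y ∈ J2 → x * y = 0 := by
    intro x y hx hy
    have h1 : x * y ∈ J ^ 4 := by
      have h2 := Ideal.mul_mem_mul (hJ2def ▸ hx) (hJ2def ▸ hy)
      rwa [← pow_add] at h2
    rw [hb4] at h1
    simpa using h1
  let b := Module.finBasisOfFinrankEq k (J2.restrictScalars k) hN2
  have hmem : ∀ i : Fin 2, ((b i : Q0 k f)) ∈ J2 := fun i => (b i).2
  have hli : LinearIndependent k fun i : Fin 2 => ((b i : Q0 k f)) :=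
    b.linearIndependent.map' (J2.restrictScalars k).subtype (Submodule.ker_subtype _)
  refine ⟨b 0, b 1, ?_, hprod _ _ (hmem 0) (hmem 0), hprod _ _ (hmem 1) (hmem 1),
    hprod _ _ (hmem 0) (hmem 1)⟩
  have hfun : ![((b 0 : Q0 k f)), ((b 1 : Q0 k f))] = fun i : Fin 2 => ((b i : Q0 k f)) := by
    funext i; fin_cases i <;> rfl
  rw [hfun]
  exact hli

end EKL
end

section
/- Let k be a field with char(k) ≠ 2 and let q be a nondegenerate quadratic form over k of rank at least 2 that is anisotropic, i.e., q admits no nonzero vector v with q(v) = 0. Then for every n ≥ 1, every polynomial map f : 𝔸ⁿ → 𝔸ⁿ vanishing at 0 with an isolated zero at 0, and every k-linear φ : Q₀(f) → k with φ(E) = 1, the EKL form β_φ is not isometric to q. In particular, if −1 is not a square in k, the form ⟨1,1⟩ is not realizable as an EKL form at 0. -/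
open MvPolynomial Module

namespace EKL

variable (k : Type) [Field k]

/-- A bilinear form is symmetric. -/
def IsSymmForm {V : Type} [AddCommGroup V] [Module k V]
    (B : V →ₗ[k] V →ₗ[k] k) : Prop :=
  ∀ v w, B v w = B w v

/-- A bilinear form is nondegenerate. -/
def IsNondegForm {V : Type} [AddCommGroup V] [Module k V]
    (B : V →ₗ[k] V →ₗ[k] k) : Prop :=
  ∀ v, (∀ w, B v w = 0) → v = 0

/-! Auxiliary machinery for the proof. -/

noncomputable def eps0 (n : ℕ) : Loc k n →+* k :=
  IsLocalization.lift (M := S k n) (S := Loc k n)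
    (g := (constantCoeff : MvPolynomial (Fin n) k →+* k))
    (fun s => isUnit_iff_ne_zero.mpr s.2)

lemma eps0_algebraMap (n : ℕ) (p : MvPolynomial (Fin n) k) :
    eps0 k n (algebraMap _ _ p) = constantCoeff p := IsLocalization.lift_eq _ _

lemma isUnit_of_eps0_ne_zero {n : ℕ} {z : Loc k n} (h : eps0 k n z ≠ 0) : IsUnit z := by
  obtain ⟨⟨p, s⟩, rfl⟩ := IsLocalization.mk'_surjective (S k n) z
  have hp : constantCoeff p ≠ 0 := by
    intro h0
    exact h (((IsLocalization.lift_mk'_spec _ _ _ _).mpr (by simp [h0])))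
  exact IsUnit.of_mul_eq_one _
    (IsLocalization.mk'_mul_mk'_eq_one (M := S k n) (S := Loc k n) ⟨p, hp⟩ s)

instance locNontrivial (n : ℕ) : Nontrivial (Loc k n) :=
  ⟨⟨0, 1, fun h => by have := congrArg (eps0 k n) h; simp at this⟩⟩

instance locLocal (n : ℕ) : IsLocalRing (Loc k n) := by
  apply IsLocalRing.of_nonunits_add
  intro a b ha hb hab
  have ea : eps0 k n a = 0 := by
    by_contra h; exact ha (isUnit_of_eps0_ne_zero k h)
  have eb : eps0 k n b = 0 := by
    by_contra h; exact hb (isUnit_of_eps0_ne_zero k h)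
  have : IsUnit (eps0 k n (a + b)) := hab.map (eps0 k n)
  rw [map_add, ea, eb, add_zero] at this
  exact not_isUnit_zero this

set_option maxHeartbeats 1000000 in
set_option synthInstance.maxHeartbeats 1000000 in
theorem key_aniso (V : Type) [AddCommGroup V] [Module k V]
    (q : V →ₗ[k] V →ₗ[k] k) (hfdV : FiniteDimensional k V) (hrank : 2 ≤ Module.finrank k V)
    (haniso : ∀ v : V, q v v = 0 → v = 0)
    (n : ℕ) (f : Fin n → MvPolynomial (Fin n) k)
    (hf0 : ∀ i, constantCoeff (f i) = 0) (hfd : FiniteDimensional k (Q0 k f))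
    (A : Matrix (Fin n) (Fin n) (MvPolynomial (Fin n) k)) (hA : IsSocleMatrix k f A)
    (φ : Q0 k f →ₗ[k] k) (hφ : φ (toQ0 k f A.det) = 1) :
    ¬ Isometric k (Q0 k f) V (beta k (V := Q0 k f) φ) q := by
  classical
  rintro ⟨e, he⟩
  haveI ntrivQ : Nontrivial (Q0 k f) := by
    rcases subsingleton_or_nontrivial (Q0 k f) with h | h
    · exfalso
      have h0 : toQ0 k f A.det = 0 := Subsingleton.elim _ _
      rw [h0, map_zero] at hφ
      exact one_ne_zero hφ.symm
    · exact h
  haveI : IsLocalRing (Q0 k f) :=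
    IsLocalRing.of_surjective' (Ideal.Quotient.mk (idealOf k f)) Ideal.Quotient.mk_surjective
  have hle : idealOf k f ≤ RingHom.ker (eps0 k n) := by
    rw [idealOf, Ideal.span_le]
    rintro x ⟨i, rfl⟩
    simp [SetLike.mem_coe, RingHom.mem_ker, eps0_algebraMap, hf0 i]
  set ε : Q0 k f →+* k :=
    Ideal.Quotient.lift (idealOf k f) (eps0 k n) (fun a ha => RingHom.mem_ker.mp (hle ha)) with hεdef
  have hεalg : ∀ c : k, ε (@algebraMap k (Q0 k f) _ (Ideal.Quotient.commRing _).toSemiring _ c) = c := by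
    intro c
    rw [IsScalarTower.algebraMap_apply k (Loc k n) (Q0 k f),
        IsScalarTower.algebraMap_apply k (MvPolynomial (Fin n) k) (Loc k n),
        Ideal.Quotient.algebraMap_eq, hεdef, Ideal.Quotient.lift_mk, eps0_algebraMap]
    simp [MvPolynomial.algebraMap_eq]
  have hsurjε : Function.Surjective ε := fun c => ⟨algebraMap k _ c, hεalg c⟩
  set εl : Q0 k f →ₗ[k] k :=
    { toFun := ε
      map_add' := map_add ε
      map_smul' := by
        intro c x
        simp only [RingHom.id_apply, smul_eq_mul]
        have hs : c • x = algebraMap k (Q0 k f) c * x := Algebra.smul_def c x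
        rw [hs, map_mul, hεalg] } with hεldef
  have hQ2 : 2 ≤ Module.finrank k (Q0 k f) := by
    rw [e.finrank_eq]; exact hrank
  have hkerne : LinearMap.ker εl ≠ ⊥ := by
    intro hbot
    have hinj : Function.Injective εl := LinearMap.ker_eq_bot.mp hbot
    have hle1 := LinearMap.finrank_le_finrank_of_injective hinj
    rw [finrank_self] at hle1
    omega
  obtain ⟨v, hvmem, hvne⟩ := (Submodule.ne_bot_iff _).mp hkerne
  have hεv : ε v = 0 := hvmem
  have hmax : RingHom.ker ε = IsLocalRing.maximalIdeal (Q0 k f) :=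
    IsLocalRing.ker_eq_maximalIdeal (R := Q0 k f) (K := k) ε hsurjε
  haveI : IsArtinianRing (Q0 k f) := isArtinian_of_tower k inferInstance
  obtain ⟨m, hm⟩ := IsArtinianRing.isNilpotent_jacobson_bot (R := Q0 k f)
  rw [IsLocalRing.jacobson_eq_maximalIdeal (R := Q0 k f) ⊥ bot_ne_top] at hm
  have hvm : v ^ m = 0 := by
    have h1 : v ∈ RingHom.ker ε := hεv
    rw [hmax] at h1
    have h2 := Ideal.pow_mem_pow h1 m
    rw [hm] at h2
    simpa using h2
  have hex : ∃ t, v ^ t = 0 := ⟨m, hvm⟩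
  set m0 := Nat.find hex with hm0def
  have hm0z : v ^ m0 = 0 := Nat.find_spec hex
  have h2m : 2 ≤ m0 := by
    have h0 : m0 ≠ 0 := fun h => by rw [h, pow_zero] at hm0z; exact one_ne_zero (by have h := congrArg ε hm0z; rwa [map_one, map_zero] at h)
    have h1 : m0 ≠ 1 := fun h => by rw [h, pow_one] at hm0z; exact hvne hm0z
    omega
  set w := v ^ (m0 - 1) with hwdef
  have hwne : w ≠ 0 := Nat.find_min hex (by omega)
  have hww : w * w = 0 := by
    have h3 : w * w = v ^ m0 * v ^ (m0 - 2) := by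
      rw [hwdef, ← pow_add, ← pow_add]; congr 1; omega
    rw [h3, hm0z]; exact zero_mul (v ^ (m0 - 2))
  have hq0 : q (e w) (e w) = 0 := by
    rw [he]
    show φ (w * w) = 0
    rw [hww, map_zero]
  exact hwne (e.map_eq_zero_iff.mp (haniso (e w) hq0))


theorem stmt18 (hchar : ringChar k ≠ 2) :
    (∀ (V : Type) [AddCommGroup V] [Module k V],
      ∀ q : V →ₗ[k] V →ₗ[k] k, FiniteDimensional k V → 2 ≤ Module.finrank k V →
        IsSymmForm k q → IsNondegForm k q → (∀ v : V, q v v = 0 → v = 0) →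
        ∀ (n : ℕ) (f : Fin n → MvPolynomial (Fin n) k),
          (∀ i, constantCoeff (f i) = 0) → FiniteDimensional k (Q0 k f) →
          ∀ A : Matrix (Fin n) (Fin n) (MvPolynomial (Fin n) k), IsSocleMatrix k f A →
          ∀ φ : Q0 k f →ₗ[k] k, φ (toQ0 k f A.det) = 1 →
            ¬ Isometric k (Q0 k f) V (beta k (V := Q0 k f) φ) q) ∧
    ((¬ ∃ c : k, c * c = -1) →
      ∀ (n : ℕ) (f : Fin n → MvPolynomial (Fin n) k),
        (∀ i, constantCoeff (f i) = 0) → FiniteDimensional k (Q0 k f) →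
        ∀ A : Matrix (Fin n) (Fin n) (MvPolynomial (Fin n) k), IsSocleMatrix k f A →
        ∀ φ : Q0 k f →ₗ[k] k, φ (toQ0 k f A.det) = 1 →
          ¬ Isometric k (Q0 k f) (Fin 2 → k) (beta k (V := Q0 k f) φ) (diagForm k 2 ![1, 1])) := by
  constructor
  · intro V _ _ q hfdV hrank hsym hnd haniso n f hf0 hfd A hA φ hφ
    exact key_aniso k V q hfdV hrank haniso n f hf0 hfd A hA φ hφ
  · intro hsq n f hf0 hfd A hA φ hφ
    have haniso : ∀ v : Fin 2 → k, diagForm k 2 ![1, 1] v v = 0 → v = 0 := by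
      intro v hv
      simp only [diagForm, LinearMap.mk₂_apply, Fin.sum_univ_two, Matrix.cons_val_zero,
        Matrix.cons_val_one, Matrix.head_cons, one_mul] at hv
      by_cases h1 : v 1 = 0
      · rw [h1] at hv
        simp only [mul_zero, add_zero, mul_self_eq_zero] at hv
        funext i; fin_cases i <;> simp [hv, h1]
      · exfalso
        apply hsq
        refine ⟨v 0 / v 1, ?_⟩
        field_simp
        linear_combination hv
    exact key_aniso k (Fin 2 → k) (diagForm k 2 ![1, 1]) inferInstance
      (by simp [Module.finrank_fin_fun]) haniso n f hf0 hfd A hA φ hφ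


end EKL
end
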